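/- arXiv:math/0407057 — 4 statements merged into one kernel-verified Lean document; each statement's English description precedes it below -/
import Mathlib

section
/- The function K is continuous on ℝ₊^I, and K(n) ≤ 0 for every n ∈ ℝ₊^I, with strict inequality K(n) < 0 unless n is an invariant state. -/
open Real Set Filter Topology

noncomputable section

/-- Feasible set for the bandwidth allocation problem at state `n`: the vector
`Λ⁺ = (Λ_i : i ∈ I₊(n))` is embedded in `ℝ^I` by requiring `L i = 0` whenever `n i = 0`. -/
def Feasible {I J : ℕ} (A : Fin J → Fin I → ℝ) (C : Fin J → ℝ)
    (n : Fin I → ℝ) : Set (Fin I → ℝ) :=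
  {L | (∀ i, 0 ≤ L i) ∧ (∀ i, n i = 0 → L i = 0) ∧ ∀ j, ∑ i, A j i * L i ≤ C j}

/-- The objective `G_n(Λ⁺)`, taking the value `⊥ = -∞` when `α ≥ 1` and some
coordinate of `Λ⁺` in `I₊(n)` vanishes. -/
def Gfun {I : ℕ} (α : ℝ) (κ : Fin I → ℝ) (n L : Fin I → ℝ) : EReal :=
  if 1 ≤ α ∧ ∃ i, 0 < n i ∧ L i = 0 then ⊥
  else if α = 1 then
    ((∑ i, if 0 < n i then κ i * n i * Real.log (L i) else 0 : ℝ) : EReal)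
  else
    ((∑ i, if 0 < n i then κ i * n i ^ α * L i ^ (1 - α) / (1 - α) else 0 : ℝ) : EReal)

/-- `L` is an optimal weighted α-fair bandwidth allocation for the state `n`,
i.e. a maximizer of `G_n` over the feasible set for `n` (with `L i = 0` for `i ∈ I₀(n)`). -/
def IsAlloc {I J : ℕ} (A : Fin J → Fin I → ℝ) (C : Fin J → ℝ) (α : ℝ)
    (κ : Fin I → ℝ) (n L : Fin I → ℝ) : Prop :=
  L ∈ Feasible A C n ∧ ∀ L' ∈ Feasible A C n, Gfun α κ n L' ≤ Gfun α κ n L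

/-- `f` is absolutely continuous on `[0, T]` for every `T > 0` (ε-δ definition with
finitely many pairwise disjoint subintervals). -/
def AbsContNonneg (f : ℝ → ℝ) : Prop :=
  ∀ T > (0:ℝ), ∀ ε > (0:ℝ), ∃ δ > (0:ℝ), ∀ (m : ℕ) (a b : Fin m → ℝ),
    (∀ k, 0 ≤ a k ∧ a k ≤ b k ∧ b k ≤ T) →
    (∀ k l, k < l → b k ≤ a l ∨ b l ≤ a k) →
    (∑ k, (b k - a k)) < δ → (∑ k, |f (b k) - f (a k)|) < ε

/-- Fluid model solution: `n : [0,∞) → ℝ₊^I` absolutely continuous, and at every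
regular point `t` the derivative conditions (13) and capacity condition (14) hold. -/
def IsFluidSol {I J : ℕ} (A : Fin J → Fin I → ℝ) (C : Fin J → ℝ)
    (ν μ : Fin I → ℝ) (Λ : (Fin I → ℝ) → Fin I → ℝ)
    (n : ℝ → Fin I → ℝ) : Prop :=
  (∀ i, AbsContNonneg fun t => n t i) ∧
  (∀ t ∈ Ici (0:ℝ), ∀ i, 0 ≤ n t i) ∧
  ∀ t ∈ Ici (0:ℝ),
    (∀ i, DifferentiableWithinAt ℝ (fun s => n s i) (Ici 0) t) →
    (∀ i, (0 < n t i →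
        HasDerivWithinAt (fun s => n s i) (ν i - μ i * Λ (n t) i) (Ici 0) t) ∧
      (n t i = 0 → HasDerivWithinAt (fun s => n s i) 0 (Ici 0) t)) ∧
    ∀ j, (∑ i, A j i * (if 0 < n t i then Λ (n t) i else ν i / μ i)) ≤ C j

/-- The set `J*` of critically loaded resources. -/
def Jstar {I J : ℕ} (A : Fin J → Fin I → ℝ) (C : Fin J → ℝ)
    (ν μ : Fin I → ℝ) : Set (Fin J) :=
  {j | ∑ i, A j i * (ν i / μ i) = C j}

/-- The workload map `w(n)`. -/
def wl {I J : ℕ} (A : Fin J → Fin I → ℝ) (μ : Fin I → ℝ)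
    (n : Fin I → ℝ) : Fin J → ℝ :=
  fun j => ∑ i, A j i * n i / μ i

/-- Feasible set of the workload optimization problem (22) for workload `w`. -/
def WFeasible {I J : ℕ} (A : Fin J → Fin I → ℝ) (C : Fin J → ℝ)
    (ν μ : Fin I → ℝ) (w : Fin J → ℝ) : Set (Fin I → ℝ) :=
  {m | (∀ i, 0 ≤ m i) ∧ ∀ j ∈ Jstar A C ν μ, w j ≤ ∑ i, A j i * m i / μ i}

/-- The Lyapunov function `F`. -/
def Ffun {I : ℕ} (α : ℝ) (κ ν μ : Fin I → ℝ) (n : Fin I → ℝ) : ℝ :=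
  (1 / (α + 1)) * ∑ i, ν i * κ i * μ i ^ (α - 1) * (n i / ν i) ^ (α + 1)

/-- The function `K` (the derivative of `F` along fluid model solutions). -/
def Kfun {I : ℕ} (α : ℝ) (κ ν μ : Fin I → ℝ)
    (Λ : (Fin I → ℝ) → Fin I → ℝ) (n : Fin I → ℝ) : ℝ :=
  ∑ i, if 0 < n i then κ i * (μ i * n i / ν i) ^ α * (ν i / μ i - Λ n i) else 0

namespace S10

def phi (α x : ℝ) : ℝ := if α = 1 then Real.log x else x ^ (1 - α) / (1 - α)


lemma phi_def_one {α : ℝ} (h : α = 1) : phi α = Real.log := by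
  funext x; simp [phi, h]

lemma phi_def_ne {α : ℝ} (h : α ≠ 1) : phi α = fun x => x ^ (1 - α) / (1 - α) := by
  funext x; simp [phi, h]

lemma phi_hasDerivAt {α x : ℝ} (hx : 0 < x) : HasDerivAt (phi α) (x ^ (-α)) x := by
  rcases eq_or_ne α 1 with h | h
  · rw [phi_def_one h, h]
    simpa [Real.rpow_neg_one] using Real.hasDerivAt_log hx.ne'
  · rw [phi_def_ne h]
    have h1 : (1 : ℝ) - α ≠ 0 := sub_ne_zero.2 (Ne.symm h)
    have := (Real.hasDerivAt_rpow_const (x := x) (p := 1 - α) (Or.inl hx.ne')).div_const (1 - α)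
    refine this.congr_deriv ?_
    rw [mul_comm, mul_div_assoc, div_self h1, mul_one, show (1 : ℝ) - α - 1 = -α by ring]

lemma phi_mono {α : ℝ} (hα : 0 < α) {x y : ℝ} (hx : 0 < x) (hxy : x ≤ y) :
    phi α x ≤ phi α y := by
  rcases eq_or_ne α 1 with h | h
  · rw [phi_def_one h]; exact Real.log_le_log hx hxy
  · rw [phi_def_ne h]
    rcases lt_or_gt_of_ne (sub_ne_zero.2 (Ne.symm h)) with hneg | hpos
    · have h2 : y ^ (1 - α) ≤ x ^ (1 - α) :=
        Real.rpow_le_rpow_of_nonpos hx hxy hneg.le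
      exact div_le_div_of_nonpos_of_le hneg.le h2
    · have h2 : x ^ (1 - α) ≤ y ^ (1 - α) := Real.rpow_le_rpow hx.le hxy hpos.le
      exact div_le_div_of_nonneg_right h2 hpos.le

def gsum {I : ℕ} (α : ℝ) (κ n L : Fin I → ℝ) : ℝ :=
  ∑ i, if 0 < n i then κ i * n i ^ α * phi α (L i) else 0

variable {I J : ℕ} {A : Fin J → Fin I → ℝ} {C : Fin J → ℝ} {α : ℝ} {κ n L M : Fin I → ℝ}

lemma Gfun_eq (hbot : ¬(1 ≤ α ∧ ∃ i, 0 < n i ∧ L i = 0)) :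
    Gfun α κ n L = ((gsum α κ n L : ℝ) : EReal) := by
  unfold Gfun gsum
  rw [if_neg hbot]
  rcases eq_or_ne α 1 with h | h
  · rw [if_pos h]
    norm_cast
    refine Finset.sum_congr rfl fun i _ => ?_
    split_ifs with hi
    · rw [phi, if_pos h, h, Real.rpow_one]
    · rfl
  · rw [if_neg h]
    norm_cast
    refine Finset.sum_congr rfl fun i _ => ?_
    split_ifs with hi
    · rw [phi, if_neg h, mul_div_assoc]
    · rfl

lemma gsum_le_of_alloc (hL : IsAlloc A C α κ n L) (hM : M ∈ Feasible A C n)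
    (h1 : ¬(1 ≤ α ∧ ∃ i, 0 < n i ∧ L i = 0)) (h2 : ¬(1 ≤ α ∧ ∃ i, 0 < n i ∧ M i = 0)) :
    gsum α κ n M ≤ gsum α κ n L := by
  have := hL.2 M hM
  rw [Gfun_eq h1, Gfun_eq h2] at this
  exact_mod_cast this

lemma feas_bound (hA01 : ∀ j i, A j i = 0 ∨ A j i = 1) (hL : L ∈ Feasible A C n)
    {j : Fin J} {i : Fin I} (hj : A j i = 1) : L i ≤ C j := by
  calc L i = A j i * L i := by rw [hj, one_mul]
    _ ≤ ∑ i', A j i' * L i' := by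
        refine Finset.single_le_sum (f := fun i' => A j i' * L i') (fun i' _ => ?_)
          (Finset.mem_univ i)
        rcases hA01 j i' with h | h <;> simp [h, hL.1 i']
    _ ≤ C j := hL.2.2 j

lemma feas_convex (hL : L ∈ Feasible A C n) (hM : M ∈ Feasible A C n)
    {t : ℝ} (h0 : 0 ≤ t) (h1 : t ≤ 1) :
    (fun i => (1 - t) * L i + t * M i) ∈ Feasible A C n := by
  obtain ⟨hL0, hLz, hLc⟩ := hL
  obtain ⟨hM0, hMz, hMc⟩ := hM
  have h1' : 0 ≤ 1 - t := by linarith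
  refine ⟨fun i => by have := hL0 i; have := hM0 i; positivity,
    fun i hi => by simp [hLz i hi, hMz i hi], fun j => ?_⟩
  have : ∑ i, A j i * ((1 - t) * L i + t * M i)
      = (1 - t) * ∑ i, A j i * L i + t * ∑ i, A j i * M i := by
    rw [Finset.mul_sum, Finset.mul_sum, ← Finset.sum_add_distrib]
    exact Finset.sum_congr rfl fun i _ => by ring
  rw [this]
  calc (1 - t) * ∑ i, A j i * L i + t * ∑ i, A j i * M i
      ≤ (1 - t) * C j + t * C j := by
        gcongr
        · exact hLc j
        · exact hMc j
    _ = C j := by ring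


-- the positive constant vector on the support of n is feasible
lemma posvec_feas (hA01 : ∀ j i, A j i = 0 ∨ A j i = 1) (hIpos : 0 < I)
    {δ : ℝ} (hδ : 0 < δ) (hδC : ∀ j, δ ≤ C j) :
    (fun i => if 0 < n i then δ / I else 0) ∈ Feasible A C n := by
  have hI' : (0:ℝ) < I := by exact_mod_cast hIpos
  refine ⟨fun i => by positivity, fun i hi => by simp [hi], fun j => ?_⟩
  calc ∑ i, A j i * (if 0 < n i then δ / I else 0)
      ≤ ∑ _i : Fin I, δ / I := by
        refine Finset.sum_le_sum fun i _ => ?_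
        rcases hA01 j i with h | h <;> split_ifs <;> simp [h] <;> positivity
    _ = δ := by
        rw [Finset.sum_const, Finset.card_univ, Fintype.card_fin, nsmul_eq_mul]
        field_simp
    _ ≤ C j := hδC j

lemma single_feas (hA01 : ∀ j i, A j i = 0 ∨ A j i = 1)
    {δ : ℝ} (hδ : 0 < δ) (hδC : ∀ j, δ ≤ C j) {i : Fin I} (hi : 0 < n i) :
    (fun i' => if i' = i then δ else 0) ∈ Feasible A C n := by
  refine ⟨fun i' => by positivity, fun i' hi' => ?_, fun j => ?_⟩
  · simp only []
    split_ifs with h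
    · subst h; exact absurd hi' (ne_of_gt hi)
    · rfl
  · calc ∑ i', A j i' * (if i' = i then δ else 0)
        = A j i * δ := by
          rw [Finset.sum_eq_single i] <;> simp +contextual
      _ ≤ δ := by rcases hA01 j i with h | h <;> simp [h, hδ.le]
      _ ≤ C j := hδC j

lemma alloc_pos (hα : 0 < α) (hA01 : ∀ j i, A j i = 0 ∨ A j i = 1)
    {δ : ℝ} (hδ : 0 < δ) (hδC : ∀ j, δ ≤ C j)
    (hκ : ∀ i, 0 < κ i) (hn : ∀ i, 0 ≤ n i)
    (halloc : IsAlloc A C α κ n L) {i : Fin I} (hi : 0 < n i) : 0 < L i := by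
  rcases lt_or_ge (L i) 0 with h | h
  · exact absurd (halloc.1.1 i) (not_le.2 h)
  rcases h.lt_or_eq with h | h
  · exact h
  exfalso
  have hL0 : L i = 0 := h.symm
  rcases le_or_gt 1 α with hα1 | hα1
  · -- α ≥ 1 : Gfun n L = ⊥ but a positive feasible point has real value
    have hbot : Gfun α κ n L = ⊥ := by
      unfold Gfun; rw [if_pos ⟨hα1, i, hi, hL0⟩]
    have hIpos : 0 < I := i.pos
    have hfeas := posvec_feas (n := n) hA01 hIpos hδ hδC
    have hne : ¬(1 ≤ α ∧ ∃ i', 0 < n i' ∧ (if 0 < n i' then δ / (I:ℝ) else 0) = 0) := by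
      rintro ⟨-, i', hi', hz⟩
      rw [if_pos hi'] at hz
      have hI' : (0:ℝ) < I := by exact_mod_cast hIpos
      have : 0 < δ / (I:ℝ) := by positivity
      exact this.ne' hz
    have := halloc.2 _ hfeas
    rw [hbot, Gfun_eq hne] at this
    exact (EReal.coe_ne_bot _) (le_bot_iff.mp this)
  · -- α < 1 : local perturbation increases the objective
    have hexp : (0:ℝ) < 1 - α := by linarith
    set W : ℝ := ∑ i', (if 0 < n i' then κ i' * n i' ^ α * L i' ^ (1 - α) else 0) with hW
    have hWnn : 0 ≤ W := by
      refine Finset.sum_nonneg fun i' _ => ?_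
      split_ifs with h'
      · have := hκ i'; have := halloc.1.1 i'; positivity
      · exact le_refl 0
    have hαne : α ≠ 1 := ne_of_lt hα1
    set c1 : ℝ := κ i * n i ^ α * δ ^ (1 - α) with hc1
    have hc1pos : 0 < c1 := by have := hκ i; positivity
    set t : ℝ := min (1/2) ((c1 / (W + 1)) ^ (1/α)) with ht
    have htpos : 0 < t := lt_min (by norm_num) (by positivity)
    have ht1 : t < 1 := lt_of_le_of_lt (min_le_left _ _) (by norm_num)
    have htα : t ^ α * (W + 1) ≤ c1 := by
      have h1 : t ^ α ≤ ((c1 / (W + 1)) ^ (1/α)) ^ α :=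
        Real.rpow_le_rpow htpos.le (min_le_right _ _) hα.le
      have h2 : ((c1 / (W + 1)) ^ (1/α : ℝ)) ^ α = c1 / (W + 1) := by
        rw [← Real.rpow_mul (by positivity), one_div, inv_mul_cancel₀ hα.ne', Real.rpow_one]
      rw [h2] at h1
      calc t ^ α * (W + 1) ≤ (c1 / (W + 1)) * (W + 1) :=
            mul_le_mul_of_nonneg_right h1 (by positivity)
        _ = c1 := div_mul_cancel₀ _ (by positivity)
    have hsf := single_feas (n := n) hA01 hδ hδC hi
    have hLtfeas := feas_convex halloc.1 hsf htpos.le ht1.le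
    set Lt : Fin I → ℝ := fun i' => (1 - t) * L i' + t * (if i' = i then δ else 0) with hLtdef
    have hgle : gsum α κ n Lt ≤ gsum α κ n L :=
      gsum_le_of_alloc halloc hLtfeas
        (by rintro ⟨h1, -⟩; exact absurd h1 (not_le.2 hα1))
        (by rintro ⟨h1, -⟩; exact absurd h1 (not_le.2 hα1))
    have key : c1 * t ^ (1 - α) / (1 - α) - t * W / (1 - α)
        ≤ gsum α κ n Lt - gsum α κ n L := by
      rw [gsum, gsum, ← Finset.sum_sub_distrib]
      have hterm : ∀ i' ∈ Finset.univ,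
          (if i' = i then c1 * t ^ (1 - α) / (1 - α) else 0)
            - t * (if 0 < n i' then κ i' * n i' ^ α * L i' ^ (1 - α) else 0) / (1 - α)
          ≤ (if 0 < n i' then κ i' * n i' ^ α * phi α (Lt i') else 0)
            - (if 0 < n i' then κ i' * n i' ^ α * phi α (L i') else 0) := by
        intro i' _
        rcases eq_or_ne i' i with rfl | hne
        · rw [if_pos rfl, if_pos hi, if_pos hi]
          have hLti : Lt i' = t * δ := by simp [hLtdef, hL0]
          rw [hLti, hL0, phi_def_ne hαne]
          simp only [Real.zero_rpow hexp.ne', zero_div, mul_zero, sub_zero, ite_self]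
          rw [Real.mul_rpow htpos.le hδ.le]
          exact le_of_eq (by rw [hc1]; ring)
        · rw [if_neg hne]
          split_ifs with hpos
          · have hLti : Lt i' = (1 - t) * L i' := by simp [hLtdef, hne]
            simp only [hLti, phi_def_ne hαne]
            have hLnn : 0 ≤ L i' := halloc.1.1 i'
            rw [Real.mul_rpow (by linarith) hLnn]
            have hpow : 1 - t ≤ (1 - t) ^ (1 - α) := by
              have := Real.rpow_le_rpow_of_exponent_ge (x := 1 - t)
                (by linarith) (by linarith) (by linarith : 1 - α ≤ 1)
              rwa [Real.rpow_one] at this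
            have hK : 0 ≤ κ i' * n i' ^ α * L i' ^ (1 - α) := by
              have := hκ i'; positivity
            have h4 : 0 ≤ κ i' * n i' ^ α * L i' ^ (1 - α) * ((1 - t) ^ (1 - α) - (1 - t)) / (1 - α) :=
              div_nonneg (mul_nonneg hK (sub_nonneg.2 hpow)) hexp.le
            rw [← sub_nonneg]
            have heq2 : κ i' * n i' ^ α * ((1 - t) ^ (1 - α) * L i' ^ (1 - α) / (1 - α))
                  - κ i' * n i' ^ α * (L i' ^ (1 - α) / (1 - α))
                  - (0 - t * (κ i' * n i' ^ α * L i' ^ (1 - α)) / (1 - α))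
                = κ i' * n i' ^ α * L i' ^ (1 - α) * ((1 - t) ^ (1 - α) - (1 - t)) / (1 - α) := by
              field_simp
              ring
            rw [heq2]
            exact h4
          · simp
      calc c1 * t ^ (1 - α) / (1 - α) - t * W / (1 - α)
          = ∑ i', ((if i' = i then c1 * t ^ (1 - α) / (1 - α) else 0)
              - t * (if 0 < n i' then κ i' * n i' ^ α * L i' ^ (1 - α) else 0) / (1 - α)) := by
            rw [Finset.sum_sub_distrib]
            congr 1
            · simp
            · rw [← Finset.sum_div, ← Finset.mul_sum, hW]
        _ ≤ _ := Finset.sum_le_sum hterm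
    have hpos2 : 0 < c1 * t ^ (1 - α) / (1 - α) - t * W / (1 - α) := by
      have htαpos : 0 < t ^ α := Real.rpow_pos_of_pos htpos α
      have ht1α : 0 < t ^ (1 - α) := Real.rpow_pos_of_pos htpos (1 - α)
      have h5 : t ^ α * W < c1 := lt_of_lt_of_le (by nlinarith) htα
      have h6 : t ^ α * W * t ^ (1 - α) < c1 * t ^ (1 - α) :=
        mul_lt_mul_of_pos_right h5 ht1α
      have htt : t ^ α * t ^ (1 - α) = t := by
        rw [← Real.rpow_add htpos]; norm_num
      have h7 : t * W < c1 * t ^ (1 - α) := by nlinarith [htt]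
      have h8 : t * W / (1 - α) < c1 * t ^ (1 - α) / (1 - α) := by
        apply div_lt_div_of_pos_right h7 hexp
      linarith
    linarith [key, hgle]
lemma alloc_vi (hα : 0 < α) (hA01 : ∀ j i, A j i = 0 ∨ A j i = 1)
    {δ : ℝ} (hδ : 0 < δ) (hδC : ∀ j, δ ≤ C j)
    (hκ : ∀ i, 0 < κ i) (hn : ∀ i, 0 ≤ n i)
    (halloc : IsAlloc A C α κ n L) {L' : Fin I → ℝ} (hL' : L' ∈ Feasible A C n) :
    ∑ i, (if 0 < n i then κ i * n i ^ α * (L i ^ (-α) * (L' i - L i)) else 0) ≤ 0 := by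
  have hLpos : ∀ i, 0 < n i → 0 < L i := fun i hi =>
    alloc_pos hα hA01 hδ hδC hκ hn halloc hi
  set g : ℝ → ℝ := fun t => gsum α κ n (fun i => (1 - t) * L i + t * L' i) with hgdef
  set D : ℝ := ∑ i, (if 0 < n i then κ i * n i ^ α * (L i ^ (-α) * (L' i - L i)) else 0)
    with hD
  have hg0 : g 0 = gsum α κ n L := by
    simp [hgdef, gsum]
  have hderiv : HasDerivAt g D 0 := by
    rw [hgdef, hD]
    unfold gsum
    refine HasDerivAt.fun_sum fun i _ => ?_
    by_cases hi : 0 < n i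
    · simp only [if_pos hi]
      have hinner : HasDerivAt (fun t : ℝ => (1 - t) * L i + t * L' i) (L' i - L i) 0 := by
        have h1 : HasDerivAt (fun t : ℝ => (1 - t) * L i + t * L' i)
            ((-1) * L i + 1 * L' i) 0 := by
          exact (((hasDerivAt_id (0:ℝ)).const_sub 1).mul_const (L i)).add
            ((hasDerivAt_id (0:ℝ)).mul_const (L' i))
        convert h1 using 1; ring
      have hval : (1 - (0:ℝ)) * L i + 0 * L' i = L i := by ring
      have hphi : HasDerivAt (phi α) ((L i) ^ (-α)) ((1 - (0:ℝ)) * L i + 0 * L' i) := by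
        rw [hval]; exact phi_hasDerivAt (hLpos i hi)
      have := (hphi.comp 0 hinner).const_mul (κ i * n i ^ α)
      simpa [mul_assoc] using this
    · simp only [if_neg hi]
      exact hasDerivAt_const 0 0
  have hle : ∀ t ∈ Ioo (0:ℝ) 1, g t ≤ g 0 := by
    intro t ht
    rw [hg0, hgdef]
    refine gsum_le_of_alloc halloc (feas_convex halloc.1 hL' ht.1.le ht.2.le) ?_ ?_
    · rintro ⟨-, i, hi, hz⟩
      exact (hLpos i hi).ne' hz
    · rintro ⟨-, i, hi, hz⟩
      have h1 : 0 < (1 - t) * L i + t * L' i := by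
        have := hLpos i hi
        have := hL'.1 i
        have h2 : 0 < (1 - t) * L i := mul_pos (by linarith [ht.2]) (hLpos i hi)
        nlinarith [ht.1]
      exact h1.ne' hz
  have htend : Tendsto (slope g 0) (𝓝[>] (0:ℝ)) (𝓝 D) :=
    (hasDerivAt_iff_tendsto_slope.1 hderiv).mono_left
      (nhdsWithin_mono 0 fun x hx => ne_of_gt hx)
  refine le_of_tendsto htend ?_
  filter_upwards [Ioo_mem_nhdsGT_of_mem (by constructor <;> norm_num : (0:ℝ) ∈ Ico (0:ℝ) 1)]
    with t ht
  have h1 : g t - g 0 ≤ 0 := sub_nonpos.2 (hle t ht)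
  have h2 : slope g 0 t = (g t - g 0) / t := by
    rw [slope_def_field]; ring
  rw [h2]
  exact div_nonpos_of_nonpos_of_nonneg h1 ht.1.le

lemma vi_combine (hα : 0 < α) (hκ : ∀ i, 0 < κ i) {x y : Fin I → ℝ}
    (hx : ∀ i, 0 < n i → 0 < x i) (hy : ∀ i, 0 < n i → 0 < y i)
    (hv1 : ∑ i, (if 0 < n i then κ i * n i ^ α * (x i ^ (-α) * (y i - x i)) else 0) ≤ 0)
    (hv2 : ∑ i, (if 0 < n i then κ i * n i ^ α * (y i ^ (-α) * (x i - y i)) else 0) ≤ 0)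
    {i : Fin I} (hi : 0 < n i) : x i = y i := by
  set F : Fin I → ℝ := fun i' =>
    if 0 < n i' then κ i' * n i' ^ α * ((x i' ^ (-α) - y i' ^ (-α)) * (y i' - x i')) else 0
    with hF
  have hsum : ∑ i', F i' ≤ 0 := by
    have : ∀ i' ∈ Finset.univ, F i'
        = (if 0 < n i' then κ i' * n i' ^ α * (x i' ^ (-α) * (y i' - x i')) else 0)
        + (if 0 < n i' then κ i' * n i' ^ α * (y i' ^ (-α) * (x i' - y i')) else 0) := by
      intro i' _
      simp only [hF]
      split_ifs with h
      · ring
      · ring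
    rw [Finset.sum_congr rfl this, Finset.sum_add_distrib]
    linarith [hv1, hv2]
  have hnn : ∀ i' ∈ Finset.univ, 0 ≤ F i' := by
    intro i' _
    simp only [hF]
    split_ifs with h
    · have hk : 0 ≤ κ i' * n i' ^ α := by have := hκ i'; positivity
      refine mul_nonneg hk ?_
      rcases le_total (x i') (y i') with hc | hc
      · exact mul_nonneg (sub_nonneg.2 (Real.rpow_le_rpow_of_nonpos (hx i' h) hc
          (by linarith))) (sub_nonneg.2 hc)
      · exact mul_nonneg_iff.2 (Or.inr ⟨sub_nonpos.2 (Real.rpow_le_rpow_of_nonpos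
          (hy i' h) hc (by linarith)), sub_nonpos.2 hc⟩)
    · exact le_refl 0
  have hzero : F i = 0 := by
    have hs0 : ∑ i', F i' = 0 :=
      le_antisymm hsum (Finset.sum_nonneg hnn)
    exact (Finset.sum_eq_zero_iff_of_nonneg hnn).1 hs0 i (Finset.mem_univ i)
  simp only [hF] at hzero
  rw [if_pos hi] at hzero
  by_contra hne
  rcases lt_or_gt_of_ne hne with hlt | hlt
  · have hb : y i ^ (-α) < x i ^ (-α) :=
      Real.rpow_lt_rpow_of_neg (hx i hi) hlt (by linarith)
    have : 0 < κ i * n i ^ α * ((x i ^ (-α) - y i ^ (-α)) * (y i - x i)) := by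
      have := hκ i
      have h3 : 0 < (x i ^ (-α) - y i ^ (-α)) * (y i - x i) :=
        mul_pos (by linarith) (by linarith)
      positivity
    linarith [this, hzero.le]
  · have hb : x i ^ (-α) < y i ^ (-α) :=
      Real.rpow_lt_rpow_of_neg (hy i hi) hlt (by linarith)
    have : 0 < κ i * n i ^ α * ((x i ^ (-α) - y i ^ (-α)) * (y i - x i)) := by
      have := hκ i
      have h3 : 0 < (y i ^ (-α) - x i ^ (-α)) * (x i - y i) :=
        mul_pos (by linarith) (by linarith)
      have h4 : (x i ^ (-α) - y i ^ (-α)) * (y i - x i)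
          = (y i ^ (-α) - x i ^ (-α)) * (x i - y i) := by ring
      rw [h4]
      positivity
    linarith [this, hzero.le]

lemma alloc_unique (hα : 0 < α) (hA01 : ∀ j i, A j i = 0 ∨ A j i = 1)
    {δ : ℝ} (hδ : 0 < δ) (hδC : ∀ j, δ ≤ C j)
    (hκ : ∀ i, 0 < κ i) (hn : ∀ i, 0 ≤ n i)
    (h1 : IsAlloc A C α κ n L) (h2 : IsAlloc A C α κ n M)
    {i : Fin I} (hi : 0 < n i) : L i = M i :=
  vi_combine hα hκ (fun i hi => alloc_pos hα hA01 hδ hδC hκ hn h1 hi)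
    (fun i hi => alloc_pos hα hA01 hδ hδC hκ hn h2 hi)
    (alloc_vi hα hA01 hδ hδC hκ hn h1 h2.1)
    (alloc_vi hα hA01 hδ hδC hκ hn h2 h1.1) hi

section PartD

variable {ν μ : Fin I → ℝ} {Λ : (Fin I → ℝ) → Fin I → ℝ}

lemma rho_restrict_feas (hA01 : ∀ j i, A j i = 0 ∨ A j i = 1)
    (hν : ∀ i, 0 < ν i) (hμ : ∀ i, 0 < μ i)
    (hload : ∀ j, (∑ i, A j i * (ν i / μ i)) ≤ C j) :
    (fun i => if 0 < n i then ν i / μ i else 0) ∈ Feasible A C n := by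
  refine ⟨fun i => by have := (hν i).le; have := (hμ i).le; positivity,
    fun i hi => by simp [hi], fun j => ?_⟩
  refine le_trans (Finset.sum_le_sum fun i _ => ?_) (hload j)
  have hA : 0 ≤ A j i := by rcases hA01 j i with h | h <;> simp [h]
  have hr : 0 ≤ ν i / μ i := by have := (hν i).le; have := (hμ i).le; positivity
  refine mul_le_mul_of_nonneg_left ?_ hA
  simp only []
  split_ifs <;> simp [hr]

lemma term_le {α x r : ℝ} (hα : 0 < α) (hx : 0 < x) (hr : 0 < r) :
    r ^ (-α) * (r - x) ≤ x ^ (-α) * (r - x) := by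
  rcases le_total x r with h | h
  · exact mul_le_mul_of_nonneg_right
      (Real.rpow_le_rpow_of_nonpos hx h (by linarith)) (by linarith)
  · rcases h.lt_or_eq with h' | h'
    · have h2 : x ^ (-α) < r ^ (-α) := Real.rpow_lt_rpow_of_neg hr h' (by linarith)
      nlinarith
    · rw [h']
  
lemma term_lt {α x r : ℝ} (hα : 0 < α) (hx : 0 < x) (hr : 0 < r) (hne : x ≠ r) :
    r ^ (-α) * (r - x) < x ^ (-α) * (r - x) := by
  rcases lt_or_gt_of_ne hne with h | h
  · have h2 : r ^ (-α) < x ^ (-α) := Real.rpow_lt_rpow_of_neg hx h (by linarith)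
    nlinarith
  · have h2 : x ^ (-α) < r ^ (-α) := Real.rpow_lt_rpow_of_neg hr h (by linarith)
    nlinarith

lemma kfun_term_eq (hn : ∀ i, 0 ≤ n i) (hν : ∀ i, 0 < ν i) (hμ : ∀ i, 0 < μ i) (i : Fin I) :
    κ i * (μ i * n i / ν i) ^ α * (ν i / μ i - Λ n i)
    = κ i * n i ^ α * ((ν i / μ i) ^ (-α) * (ν i / μ i - Λ n i)) := by
  have hrpos : 0 < ν i / μ i := div_pos (hν i) (hμ i)
  have h1 : μ i * n i / ν i = n i * (ν i / μ i)⁻¹ := by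
    field_simp
  rw [h1, Real.mul_rpow (hn i) (by positivity), Real.inv_rpow hrpos.le,
    ← Real.rpow_neg hrpos.le]
  ring

lemma kfun_le_vi (hα : 0 < α) (hA01 : ∀ j i, A j i = 0 ∨ A j i = 1)
    {δ : ℝ} (hδ : 0 < δ) (hδC : ∀ j, δ ≤ C j)
    (hκ : ∀ i, 0 < κ i) (hn : ∀ i, 0 ≤ n i)
    (hν : ∀ i, 0 < ν i) (hμ : ∀ i, 0 < μ i)
    (hload : ∀ j, (∑ i, A j i * (ν i / μ i)) ≤ C j)
    (halloc : IsAlloc A C α κ n (Λ n)) :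
    Kfun α κ ν μ Λ n ≤ 0 ∧
      (∀ i0, 0 < n i0 → Λ n i0 ≠ ν i0 / μ i0 → Kfun α κ ν μ Λ n < 0) := by
  have hLpos : ∀ i, 0 < n i → 0 < Λ n i := fun i hi =>
    alloc_pos hα hA01 hδ hδC hκ hn halloc hi
  have hvi := alloc_vi hα hA01 hδ hδC hκ hn halloc
    (rho_restrict_feas hA01 hν hμ hload)
  have hvi' : ∑ i, (if 0 < n i then κ i * n i ^ α * (Λ n i ^ (-α) * (ν i / μ i - Λ n i)) else 0) ≤ 0 := by
    refine le_trans (le_of_eq (Finset.sum_congr rfl fun i _ => ?_)) hvi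
    split_ifs with h <;> rfl
  have hterm : ∀ i, (if 0 < n i then κ i * (μ i * n i / ν i) ^ α * (ν i / μ i - Λ n i) else 0)
      ≤ (if 0 < n i then κ i * n i ^ α * (Λ n i ^ (-α) * (ν i / μ i - Λ n i)) else 0) := by
    intro i
    split_ifs with h
    · rw [kfun_term_eq hn hν hμ i]
      have hk : 0 ≤ κ i * n i ^ α := by have := hκ i; positivity
      exact mul_le_mul_of_nonneg_left
        (term_le hα (hLpos i h) (div_pos (hν i) (hμ i))) hk
    · exact le_refl 0
  constructor
  · exact le_trans (Finset.sum_le_sum fun i _ => hterm i) hvi'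
  · intro i0 hi0 hne
    refine lt_of_lt_of_le (Finset.sum_lt_sum (fun i _ => hterm i) ⟨i0, Finset.mem_univ i0, ?_⟩) hvi'
    rw [if_pos hi0, if_pos hi0, kfun_term_eq hn hν hμ i0]
    have hk : 0 < κ i0 * n i0 ^ α := by
      have := hκ i0
      have := Real.rpow_pos_of_pos hi0 α
      positivity
    exact mul_lt_mul_of_pos_left
      (term_lt hα (hLpos i0 hi0) (div_pos (hν i0) (hμ i0)) hne) hk

lemma const_fluid (hν : ∀ i, 0 < ν i) (hμ : ∀ i, 0 < μ i)
    (hn : ∀ i, 0 ≤ n i)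
    (hload : ∀ j, (∑ i, A j i * (ν i / μ i)) ≤ C j)
    (hfix : ∀ i, 0 < n i → Λ n i = ν i / μ i) :
    IsFluidSol A C ν μ Λ (fun _ => n) := by
  refine ⟨fun i => ?_, fun t _ i => hn i, fun t _ _ => ⟨fun i => ⟨fun hpos => ?_, fun _ => ?_⟩, fun j => ?_⟩⟩
  · intro T _ ε hε
    exact ⟨1, one_pos, fun m a b _ _ _ => by simpa using hε⟩
  · have h0 : ν i - μ i * Λ (n) i = 0 := by
      rw [hfix i hpos, mul_div_assoc', mul_comm, mul_div_assoc, div_self (hμ i).ne',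
        mul_one, sub_self]
    rw [h0]
    exact hasDerivWithinAt_const _ _ _
  · exact hasDerivWithinAt_const _ _ _
  · refine le_trans (le_of_eq (Finset.sum_congr rfl fun i _ => ?_)) (hload j)
    congr 1
    split_ifs with h
    · exact hfix i h
    · rfl

end PartD

section PartE

lemma W_le (hα : 0 < α) (hA01 : ∀ j i, A j i = 0 ∨ A j i = 1) (hI : 0 < I)
    {δ Cmax : ℝ} (hδ : 0 < δ) (hδC : ∀ j, δ ≤ C j) (hCmax : ∀ j, C j ≤ Cmax)
    (hCm0 : 0 < Cmax)
    (hAcol : ∀ i, ∃ j, A j i = 1)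
    (hκ : ∀ i, 0 < κ i) (hn : ∀ i, 0 ≤ n i) (halloc : IsAlloc A C α κ n L) :
    ∑ i, (if 0 < n i then κ i * n i ^ α * L i ^ (1 - α) else 0)
      ≤ (max ((δ / (I:ℝ)) ^ (1 - α)) (Cmax ^ (1 - α))) * ∑ i, κ i * n i ^ α := by
  have hI' : (0:ℝ) < I := by exact_mod_cast hI
  set d0 : ℝ := δ / (I:ℝ) with hd0def
  have hd0 : 0 < d0 := by positivity
  set c0 : ℝ := max (d0 ^ (1 - α)) (Cmax ^ (1 - α)) with hc0
  have hc0pos : 0 < c0 := lt_max_of_lt_left (Real.rpow_pos_of_pos hd0 _)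
  have hL0 : ∀ i, 0 ≤ L i := halloc.1.1
  have hLb : ∀ i, L i ≤ Cmax := fun i =>
    (feas_bound hA01 halloc.1 (hAcol i).choose_spec).trans (hCmax _)
  have hterm0 : ∀ i, 0 ≤ κ i * n i ^ α := by
    intro i
    have := (hκ i).le
    have := Real.rpow_nonneg (hn i) α
    positivity
  rcases le_or_gt α 1 with hle | hgt
  · refine le_trans (Finset.sum_le_sum (fun i _ => ?_)) (le_of_eq (Finset.mul_sum _ _ _).symm)
    split_ifs with h
    · have h1 : L i ^ (1 - α) ≤ Cmax ^ (1 - α) :=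
        Real.rpow_le_rpow (hL0 i) (hLb i) (by linarith)
      calc κ i * n i ^ α * L i ^ (1 - α) ≤ κ i * n i ^ α * Cmax ^ (1 - α) :=
            mul_le_mul_of_nonneg_left h1 (hterm0 i)
        _ ≤ κ i * n i ^ α * c0 :=
            mul_le_mul_of_nonneg_left (le_max_right _ _) (hterm0 i)
        _ = c0 * (κ i * n i ^ α) := by ring
    · exact mul_nonneg hc0pos.le (hterm0 i)
  · have hne : α ≠ 1 := ne_of_gt hgt
    have hneg : 1 - α < 0 := by linarith
    have hLpos : ∀ i, 0 < n i → 0 < L i := fun i hi =>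
      alloc_pos hα hA01 hδ hδC hκ hn halloc hi
    have hfeas := posvec_feas (n := n) hA01 hI hδ hδC
    have hg := gsum_le_of_alloc halloc hfeas
      (by rintro ⟨-, i, hi, hz⟩; exact (hLpos i hi).ne' hz)
      (by rintro ⟨-, i, hi, hz⟩; rw [if_pos hi] at hz; exact hd0.ne' hz)
    -- rewrite both gsums
    have hgL : gsum α κ n L
        = (∑ i, (if 0 < n i then κ i * n i ^ α * L i ^ (1 - α) else 0)) / (1 - α) := by
      rw [gsum, Finset.sum_div]
      refine Finset.sum_congr rfl fun i _ => ?_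
      split_ifs with h
      · rw [phi_def_ne hne]; ring
      · rw [zero_div]
    have hgd : gsum α κ n (fun i => if 0 < n i then d0 else 0)
        = (∑ i, (if 0 < n i then κ i * n i ^ α * d0 ^ (1 - α) else 0)) / (1 - α) := by
      rw [gsum, Finset.sum_div]
      refine Finset.sum_congr rfl fun i _ => ?_
      split_ifs with h
      · rw [phi_def_ne hne]; ring
      · rw [zero_div]
    rw [hgd, hgL] at hg
    set S2 : ℝ := ∑ i, (if 0 < n i then κ i * n i ^ α * L i ^ (1 - α) else 0) with hS2
    set S1 : ℝ := ∑ i, (if 0 < n i then κ i * n i ^ α * d0 ^ (1 - α) else 0) with hS1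
    have h21 : S2 ≤ S1 := by
      have h3 := mul_le_mul_of_nonpos_right hg hneg.le
      rwa [div_mul_cancel₀ _ (by linarith : (1:ℝ) - α ≠ 0),
        div_mul_cancel₀ _ (by linarith : (1:ℝ) - α ≠ 0)] at h3
    refine h21.trans ?_
    refine le_trans (Finset.sum_le_sum (fun i _ => ?_)) (le_of_eq (Finset.mul_sum _ _ _).symm)
    split_ifs with h
    · calc κ i * n i ^ α * d0 ^ (1 - α) ≤ κ i * n i ^ α * c0 :=
          mul_le_mul_of_nonneg_left (le_max_left _ _) (hterm0 i)
        _ = c0 * (κ i * n i ^ α) := by ring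
    · exact mul_nonneg hc0pos.le (hterm0 i)

lemma alloc_lb (hα : 0 < α) (hA01 : ∀ j i, A j i = 0 ∨ A j i = 1)
    {δ : ℝ} (hδ : 0 < δ) (hδC : ∀ j, δ ≤ C j)
    (hκ : ∀ i, 0 < κ i) (hn : ∀ i, 0 ≤ n i) (halloc : IsAlloc A C α κ n L)
    {i : Fin I} (hi : 0 < n i) :
    κ i * n i ^ α * δ
      ≤ L i ^ α * ∑ i', (if 0 < n i' then κ i' * n i' ^ α * L i' ^ (1 - α) else 0) := by
  have hLpos : ∀ i', 0 < n i' → 0 < L i' := fun i' hi' =>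
    alloc_pos hα hA01 hδ hδC hκ hn halloc hi'
  have hvi := alloc_vi hα hA01 hδ hδC hκ hn halloc (single_feas hA01 hδ hδC hi)
  have hsplit : ∀ i' ∈ Finset.univ,
      (if 0 < n i' then κ i' * n i' ^ α * (L i' ^ (-α) * ((if i' = i then δ else 0) - L i')) else 0)
      = (if 0 < n i' then κ i' * n i' ^ α * L i' ^ (-α) * (if i' = i then δ else 0) else 0)
        - (if 0 < n i' then κ i' * n i' ^ α * L i' ^ (1 - α) else 0) := by
    intro i' _
    by_cases h : 0 < n i'
    · rw [if_pos h, if_pos h, if_pos h]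
      have hpow : L i' ^ (-α) * L i' = L i' ^ (1 - α) := by
        nth_rewrite 2 [← Real.rpow_one (L i')]
        rw [← Real.rpow_add (hLpos i' h), neg_add_eq_sub]
      have h9 : κ i' * n i' ^ α * (L i' ^ (-α) * ((if i' = i then δ else 0) - L i'))
          = κ i' * n i' ^ α * L i' ^ (-α) * (if i' = i then δ else 0)
            - κ i' * n i' ^ α * (L i' ^ (-α) * L i') := by ring
      rw [h9, hpow]
    · rw [if_neg h, if_neg h, if_neg h, sub_zero]
  rw [Finset.sum_congr rfl hsplit, Finset.sum_sub_distrib] at hvi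
  have hfirst : ∑ i', (if 0 < n i' then κ i' * n i' ^ α * L i' ^ (-α) * (if i' = i then δ else 0) else 0)
      = κ i * n i ^ α * L i ^ (-α) * δ := by
    rw [Finset.sum_eq_single i]
    · simp [hi]
    · intro b _ hb
      simp [hb]
    · intro h
      exact absurd (Finset.mem_univ i) h
  rw [hfirst] at hvi
  have hstep : κ i * n i ^ α * L i ^ (-α) * δ
      ≤ ∑ i', (if 0 < n i' then κ i' * n i' ^ α * L i' ^ (1 - α) else 0) := by linarith
  have hLi := hLpos i hi
  have hcanc : L i ^ α * L i ^ (-α) = 1 := by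
    rw [← Real.rpow_add hLi]
    simp
  calc κ i * n i ^ α * δ = L i ^ α * (κ i * n i ^ α * L i ^ (-α) * δ) := by
        rw [show L i ^ α * (κ i * n i ^ α * L i ^ (-α) * δ)
            = (L i ^ α * L i ^ (-α)) * (κ i * n i ^ α * δ) by ring, hcanc, one_mul]
    _ ≤ _ := mul_le_mul_of_nonneg_left hstep (Real.rpow_nonneg hLi.le α)

lemma pow_trick {α x y Q : ℝ} (hα1 : 1 < α) (hx : 0 < x) (hy : 0 < y) (hQ : 0 ≤ Q)
    (h : x ^ α * y ^ (-α) ≤ Q) : x ^ α * y ^ (1 - α) ≤ x * Q ^ ((α - 1) / α) := by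
  have hα0 : α ≠ 0 := by linarith
  set p : ℝ := (α - 1) / α with hp
  have hp0 : 0 ≤ p := div_nonneg (by linarith) (by linarith)
  have hαp : α * p = α - 1 := by
    rw [hp]; field_simp
  have h1 : (x ^ α * y ^ (-α)) ^ p ≤ Q ^ p :=
    Real.rpow_le_rpow (by positivity) h hp0
  have h2 : (x ^ α * y ^ (-α)) ^ p = x ^ (α - 1) * y ^ (1 - α) := by
    rw [Real.mul_rpow (by positivity) (by positivity),
      ← Real.rpow_mul hx.le, ← Real.rpow_mul hy.le]
    rw [show α * p = α - 1 from hαp, show -α * p = 1 - α by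
      rw [neg_mul, hαp]; ring]
  rw [h2] at h1
  have h3 : x ^ α * y ^ (1 - α) = x * (x ^ (α - 1) * y ^ (1 - α)) := by
    rw [← mul_assoc]
    congr 1
    nth_rewrite 2 [← Real.rpow_one x]
    rw [← Real.rpow_add hx]
    ring_nf
  rw [h3]
  exact mul_le_mul_of_nonneg_left h1 hx.le

variable {ν μ : Fin I → ℝ} {Λ : (Fin I → ℝ) → Fin I → ℝ}

lemma kfun_tendsto (hI : 0 < I) (hJ : 0 < J)
    (hA01 : ∀ j i, A j i = 0 ∨ A j i = 1) (hAcol : ∀ i, ∃ j, A j i = 1)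
    (hC : ∀ j, 0 < C j) (hα : 0 < α) (hκ : ∀ i, 0 < κ i)
    (hν : ∀ i, 0 < ν i) (hμ : ∀ i, 0 < μ i)
    (hΛ : ∀ m : Fin I → ℝ, (∀ i, 0 ≤ m i) → IsAlloc A C α κ m (Λ m))
    {n : Fin I → ℝ} (hn : ∀ i, 0 ≤ n i)
    {p : ℕ → Fin I → ℝ} (hp0 : ∀ k i, 0 ≤ p k i)
    (hp : Tendsto p atTop (𝓝 n))
    {L : Fin I → ℝ} (hL : Tendsto (fun k => Λ (p k)) atTop (𝓝 L)) :
    Tendsto (fun k => Kfun α κ ν μ Λ (p k)) atTop (𝓝 (Kfun α κ ν μ Λ n)) := by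
  classical
  have hJne : (Finset.univ : Finset (Fin J)).Nonempty := ⟨⟨0, hJ⟩, Finset.mem_univ _⟩
  set δ : ℝ := Finset.univ.inf' hJne C with hδdef
  have hδ : 0 < δ := (Finset.lt_inf'_iff hJne).2 fun j _ => hC j
  have hδC : ∀ j, δ ≤ C j := fun j => Finset.inf'_le _ (Finset.mem_univ j)
  set Cmax : ℝ := Finset.univ.sup' hJne C with hCmaxdef
  have hCmax : ∀ j, C j ≤ Cmax := fun j => Finset.le_sup' _ (Finset.mem_univ j)
  have hCm0 : 0 < Cmax := lt_of_lt_of_le hδ ((hδC ⟨0, hJ⟩).trans (hCmax ⟨0, hJ⟩))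
  have halloc_k : ∀ k, IsAlloc A C α κ (p k) (Λ (p k)) := fun k => hΛ (p k) (hp0 k)
  have halloc_n : IsAlloc A C α κ n (Λ n) := hΛ n hn
  have hΛpos_k : ∀ k i, 0 < p k i → 0 < Λ (p k) i := fun k i hi =>
    alloc_pos hα hA01 hδ hδC hκ (hp0 k) (halloc_k k) hi
  have hΛ0 : ∀ k i, 0 ≤ Λ (p k) i := fun k i => (halloc_k k).1.1 i
  have hΛb : ∀ k i, Λ (p k) i ≤ Cmax := fun k i =>
    (feas_bound hA01 (halloc_k k).1 (hAcol i).choose_spec).trans (hCmax _)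
  have hpc : ∀ i, Tendsto (fun k => p k i) atTop (𝓝 (n i)) := fun i =>
    tendsto_pi_nhds.1 hp i
  have hLc : ∀ i, Tendsto (fun k => Λ (p k) i) atTop (𝓝 (L i)) := fun i =>
    tendsto_pi_nhds.1 hL i
  have hL0 : ∀ i, 0 ≤ L i := fun i => ge_of_tendsto' (hLc i) (fun k => hΛ0 k i)
  set Sinf : ℝ := ∑ i, κ i * n i ^ α with hSinfdef
  have hS : Tendsto (fun k => ∑ i, κ i * p k i ^ α) atTop (𝓝 Sinf) := by
    refine tendsto_finset_sum _ fun i _ => ?_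
    exact ((hpc i).rpow_const (Or.inr hα.le)).const_mul (κ i)
  have hSinf0 : 0 ≤ Sinf := by
    refine Finset.sum_nonneg fun i _ => ?_
    have := (hκ i).le
    have := Real.rpow_nonneg (hn i) α
    positivity
  set c0 : ℝ := max ((δ / (I:ℝ)) ^ (1 - α)) (Cmax ^ (1 - α)) with hc0def
  have hI' : (0:ℝ) < I := by exact_mod_cast hI
  have hc0 : 0 < c0 := lt_max_of_lt_left (Real.rpow_pos_of_pos (by positivity) _)
  set Wk : ℕ → ℝ := fun k =>
    ∑ i, (if 0 < p k i then κ i * p k i ^ α * Λ (p k) i ^ (1 - α) else 0) with hWkdef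
  have hWk_le : ∀ k, Wk k ≤ c0 * ∑ i, κ i * p k i ^ α := fun k =>
    W_le hα hA01 hI hδ hδC hCmax hCm0 hAcol hκ (hp0 k) (halloc_k k)
  -- positivity of L on the support of n
  have Lpos : ∀ i, 0 < n i → 0 < L i := by
    intro i hi
    have hev : ∀ᶠ k in atTop, 0 < p k i := (hpc i).eventually (eventually_gt_nhds hi)
    have hFG : ∀ᶠ k in atTop, κ i * p k i ^ α * δ
        ≤ Λ (p k) i ^ α * (c0 * ∑ i', κ i' * p k i' ^ α) := by
      filter_upwards [hev] with k hk
      refine (alloc_lb hα hA01 hδ hδC hκ (hp0 k) (halloc_k k) hk).trans ?_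
      exact mul_le_mul_of_nonneg_left (hWk_le k) (Real.rpow_nonneg (hΛ0 k i) α)
    have hFlim : Tendsto (fun k => κ i * p k i ^ α * δ) atTop (𝓝 (κ i * n i ^ α * δ)) :=
      (((hpc i).rpow_const (Or.inr hα.le)).const_mul (κ i)).mul_const δ
    have hGlim : Tendsto (fun k => Λ (p k) i ^ α * (c0 * ∑ i', κ i' * p k i' ^ α)) atTop
        (𝓝 (L i ^ α * (c0 * Sinf))) :=
      ((hLc i).rpow_const (Or.inr hα.le)).mul (hS.const_mul c0)
    have hlim : κ i * n i ^ α * δ ≤ L i ^ α * (c0 * Sinf) :=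
      le_of_tendsto_of_tendsto hFlim hGlim hFG
    rcases (hL0 i).lt_or_eq with h | h
    · exact h
    · exfalso
      rw [← h, Real.zero_rpow hα.ne', zero_mul] at hlim
      have : 0 < κ i * n i ^ α * δ := by
        have := hκ i
        have := Real.rpow_pos_of_pos hi α
        positivity
      linarith
  -- eventually p is positive on the support of n
  have heventpos : ∀ᶠ k in atTop, ∀ i, 0 < n i → 0 < p k i := by
    rw [eventually_all]
    intro i
    by_cases hni : 0 < n i
    · filter_upwards [(hpc i).eventually (eventually_gt_nhds hni)] with k hk _
      exact hk
    · filter_upwards with k h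
      exact absurd h hni
  -- the allocation of n, restricted to the support of n, is eventually feasible for p k
  set Ln : Fin I → ℝ := fun i => if 0 < n i then Λ n i else 0 with hLndef
  have hfeasLn : ∀ᶠ k in atTop, Ln ∈ Feasible A C (p k) := by
    filter_upwards [heventpos] with k hk
    refine ⟨fun i => ?_, fun i hiz => ?_, fun j => ?_⟩
    · simp only [hLndef]
      split_ifs
      · exact halloc_n.1.1 i
      · exact le_refl 0
    · simp only [hLndef]
      split_ifs with h
      · exact absurd hiz (hk i h).ne'
      · rfl
    · refine le_trans (Finset.sum_le_sum fun i _ => ?_) (halloc_n.1.2.2 j)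
      have hA0 : 0 ≤ A j i := by rcases hA01 j i with h | h <;> simp [h]
      refine mul_le_mul_of_nonneg_left ?_ hA0
      simp only [hLndef]
      split_ifs
      · exact le_refl _
      · exact halloc_n.1.1 i
  -- the limit L, restricted to the support of n, is feasible for n
  set Ls : Fin I → ℝ := fun i => if 0 < n i then L i else 0 with hLsdef
  have hfeasLs : Ls ∈ Feasible A C n := by
    refine ⟨fun i => ?_, fun i hiz => ?_, fun j => ?_⟩
    · simp only [hLsdef]
      split_ifs
      · exact hL0 i
      · exact le_refl 0
    · simp only [hLsdef]
      rw [if_neg (by rw [hiz]; exact lt_irrefl 0)]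
    · have hcap : ∀ k, ∑ i, A j i * Λ (p k) i ≤ C j := fun k => (halloc_k k).1.2.2 j
      have hlim : Tendsto (fun k => ∑ i, A j i * Λ (p k) i) atTop (𝓝 (∑ i, A j i * L i)) :=
        tendsto_finset_sum _ fun i _ => (hLc i).const_mul (A j i)
      have h2 : ∑ i, A j i * L i ≤ C j := le_of_tendsto' hlim hcap
      refine le_trans (Finset.sum_le_sum fun i _ => ?_) h2
      have hA0 : 0 ≤ A j i := by rcases hA01 j i with h | h <;> simp [h]
      refine mul_le_mul_of_nonneg_left ?_ hA0
      simp only [hLsdef]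
      split_ifs
      · exact le_refl _
      · exact hL0 i
  -- variational inequality for n against Ls
  have hvin := alloc_vi hα hA01 hδ hδC hκ hn halloc_n hfeasLs
  have hv2 : ∑ i, (if 0 < n i then κ i * n i ^ α * (Λ n i ^ (-α) * (L i - Λ n i)) else 0) ≤ 0 := by
    refine le_trans (le_of_eq (Finset.sum_congr rfl fun i _ => ?_)) hvin
    by_cases h : 0 < n i
    · rw [if_pos h, if_pos h]
      simp only [hLsdef, if_pos h]
    · rw [if_neg h, if_neg h]
  -- limit variational inequality in the other direction
  set Pk : ℕ → ℝ := fun k => ∑ i, (if 0 < n i then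
      (if 0 < p k i then κ i * p k i ^ α * (Λ (p k) i ^ (-α) * (Λ n i - Λ (p k) i)) else 0)
      else 0) with hPkdef
  set Tk : ℕ → ℝ := fun k => ∑ i, (if 0 < n i then 0 else
      (if 0 < p k i then κ i * p k i ^ α * Λ (p k) i ^ (1 - α) else 0)) with hTkdef
  have hPT : ∀ᶠ k in atTop, Pk k ≤ Tk k := by
    filter_upwards [hfeasLn] with k hk
    have hvik := alloc_vi hα hA01 hδ hδC hκ (hp0 k) (halloc_k k) hk
    have hkey : Pk k - Tk k
        = ∑ i, (if 0 < p k i then κ i * p k i ^ α * (Λ (p k) i ^ (-α) * (Ln i - Λ (p k) i)) else 0) := by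
      rw [hPkdef, hTkdef, ← Finset.sum_sub_distrib]
      refine Finset.sum_congr rfl fun i _ => ?_
      by_cases hni : 0 < n i
      · rw [if_pos hni, if_pos hni, sub_zero]
        by_cases hpi : 0 < p k i
        · rw [if_pos hpi, if_pos hpi]
          simp only [hLndef, if_pos hni]
        · rw [if_neg hpi, if_neg hpi]
      · rw [if_neg hni, if_neg hni, zero_sub]
        by_cases hpi : 0 < p k i
        · rw [if_pos hpi, if_pos hpi]
          simp only [hLndef, if_neg hni]
          have hpow : Λ (p k) i ^ (-α) * Λ (p k) i = Λ (p k) i ^ (1 - α) := by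
            nth_rewrite 2 [← Real.rpow_one (Λ (p k) i)]
            rw [← Real.rpow_add (hΛpos_k k i hpi), neg_add_eq_sub]
          rw [show Λ (p k) i ^ (-α) * (0 - Λ (p k) i)
              = -(Λ (p k) i ^ (-α) * Λ (p k) i) by ring, hpow]
          ring
        · rw [if_neg hpi, if_neg hpi, neg_zero]
    linarith [hkey ▸ hvik]
  have hTk0 : Tendsto Tk atTop (𝓝 0) := by
    have h1 : Tendsto (fun k => ∑ i, (if 0 < n i then (0:ℝ) else
        (if 0 < p k i then κ i * p k i ^ α * Λ (p k) i ^ (1 - α) else 0))) atTop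
        (𝓝 (∑ _i : Fin I, (0:ℝ))) := by
      refine tendsto_finset_sum _ fun i _ => ?_
      by_cases hni : 0 < n i
      · refine Tendsto.congr (fun k => ?_) (tendsto_const_nhds (x := (0:ℝ)))
        rw [if_pos hni]
      · refine Tendsto.congr (fun k => (if_neg hni).symm) ?_
        have hni0 : n i = 0 := le_antisymm (not_lt.1 hni) (hn i)
        have hnn : ∀ k, 0 ≤ (if 0 < p k i then κ i * p k i ^ α * Λ (p k) i ^ (1 - α) else 0) := by
          intro k
          split_ifs with h
          · have := (hκ i).le
            have := Real.rpow_nonneg (hp0 k i) α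
            have := Real.rpow_nonneg (hΛ0 k i) (1 - α)
            positivity
          · exact le_refl 0
        rcases le_or_gt α 1 with hle | hgt
        · refine squeeze_zero hnn (fun k => ?_)
            (g := fun k => κ i * p k i ^ α * Cmax ^ (1 - α)) ?_
          · split_ifs with h
            · refine mul_le_mul_of_nonneg_left ?_ (by
                have := (hκ i).le
                have := Real.rpow_nonneg (hp0 k i) α
                positivity)
              exact Real.rpow_le_rpow (hΛ0 k i) (hΛb k i) (by linarith)
            · have := (hκ i).le
              have := Real.rpow_nonneg (hp0 k i) α
              have := (Real.rpow_pos_of_pos hCm0 (1 - α)).le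
              positivity
          · have := (((hpc i).rpow_const (Or.inr hα.le)).const_mul (κ i)).mul_const
              (Cmax ^ (1 - α))
            rw [hni0, Real.zero_rpow hα.ne', mul_zero, zero_mul] at this
            exact this
        · -- α > 1
          set pp : ℝ := (α - 1) / α with hppdef
          set Qbar : ℝ := c0 * (Sinf + 1) / (δ * κ i) with hQdef
          have hQ0 : 0 ≤ Qbar := by
            rw [hQdef]
            exact div_nonneg (mul_nonneg hc0.le (by linarith)) (mul_pos hδ (hκ i)).le
          have hevS : ∀ᶠ k in atTop, (∑ i', κ i' * p k i' ^ α) ≤ Sinf + 1 :=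
            hS.eventually (eventually_le_nhds (by linarith))
          refine squeeze_zero' (Filter.Eventually.of_forall hnn) ?_
            (g := fun k => κ i * p k i * Qbar ^ pp) ?_
          · filter_upwards [hevS] with k hkS
            split_ifs with h
            · have hy := hΛpos_k k i h
              have hlb := alloc_lb hα hA01 hδ hδC hκ (hp0 k) (halloc_k k) h
              have hWb : Wk k ≤ c0 * (Sinf + 1) :=
                (hWk_le k).trans (mul_le_mul_of_nonneg_left hkS hc0.le)
              have h5 : κ i * p k i ^ α * δ ≤ Λ (p k) i ^ α * (c0 * (Sinf + 1)) :=
                hlb.trans (mul_le_mul_of_nonneg_left hWb (Real.rpow_nonneg (hΛ0 k i) α))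
              have hyc : Λ (p k) i ^ α * Λ (p k) i ^ (-α) = 1 := by
                rw [← Real.rpow_add hy]; simp
              have h6 : κ i * p k i ^ α * δ * Λ (p k) i ^ (-α)
                  ≤ c0 * (Sinf + 1) := by
                have := mul_le_mul_of_nonneg_right h5 (Real.rpow_nonneg (hΛ0 k i) (-α))
                calc κ i * p k i ^ α * δ * Λ (p k) i ^ (-α)
                    ≤ Λ (p k) i ^ α * (c0 * (Sinf + 1)) * Λ (p k) i ^ (-α) := this
                  _ = (Λ (p k) i ^ α * Λ (p k) i ^ (-α)) * (c0 * (Sinf + 1)) := by ring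
                  _ = c0 * (Sinf + 1) := by rw [hyc, one_mul]
              have h7 : p k i ^ α * Λ (p k) i ^ (-α) ≤ Qbar := by
                rw [hQdef, le_div_iff₀ (mul_pos hδ (hκ i))]
                calc p k i ^ α * Λ (p k) i ^ (-α) * (δ * κ i)
                    = κ i * p k i ^ α * δ * Λ (p k) i ^ (-α) := by ring
                  _ ≤ c0 * (Sinf + 1) := h6
              have h8 := pow_trick hgt h hy hQ0 h7
              calc κ i * p k i ^ α * Λ (p k) i ^ (1 - α)
                  = κ i * (p k i ^ α * Λ (p k) i ^ (1 - α)) := by ring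
                _ ≤ κ i * (p k i * Qbar ^ pp) := mul_le_mul_of_nonneg_left h8 (hκ i).le
                _ = κ i * p k i * Qbar ^ pp := by ring
            · have := (hκ i).le
              have := hp0 k i
              have := Real.rpow_nonneg hQ0 pp
              positivity
          · have := (((hpc i).const_mul (κ i)).mul_const (Qbar ^ pp))
            rw [hni0, mul_zero, zero_mul] at this
            exact this
    rw [hTkdef]
    simpa using h1
  set Pinf : ℝ := ∑ i, (if 0 < n i then κ i * n i ^ α * (L i ^ (-α) * (Λ n i - L i)) else 0)
    with hPinfdef
  have hPklim : Tendsto Pk atTop (𝓝 Pinf) := by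
    rw [hPkdef, hPinfdef]
    refine tendsto_finset_sum _ fun i _ => ?_
    by_cases hni : 0 < n i
    · simp only [if_pos hni]
      have hev : ∀ᶠ k in atTop, 0 < p k i := (hpc i).eventually (eventually_gt_nhds hni)
      have hlim : Tendsto (fun k => κ i * p k i ^ α * (Λ (p k) i ^ (-α) * (Λ n i - Λ (p k) i)))
          atTop (𝓝 (κ i * n i ^ α * (L i ^ (-α) * (Λ n i - L i)))) := by
        refine Tendsto.mul (((hpc i).rpow_const (Or.inr hα.le)).const_mul (κ i)) ?_
        refine Tendsto.mul ((hLc i).rpow_const (Or.inl (Lpos i hni).ne')) ?_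
        exact tendsto_const_nhds.sub (hLc i)
      refine Tendsto.congr' ?_ hlim
      filter_upwards [hev] with k hk
      rw [if_pos hk]
    · simp only [if_neg hni]
      exact tendsto_const_nhds
  have hPinf0 : Pinf ≤ 0 := le_of_tendsto_of_tendsto hPklim hTk0 hPT
  -- conclude L agrees with Λ n on the support of n
  have hfix : ∀ i, 0 < n i → Λ n i = L i := by
    intro i hi
    refine vi_combine hα hκ (x := Λ n) (y := L)
      (fun i hi => alloc_pos hα hA01 hδ hδC hκ hn halloc_n hi) Lpos hv2 ?_ hi
    exact hPinf0
  -- final limit computation for Kfun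
  unfold Kfun
  refine tendsto_finset_sum _ fun i _ => ?_
  by_cases hni : 0 < n i
  · rw [if_pos hni]
    have hev : ∀ᶠ k in atTop, 0 < p k i := (hpc i).eventually (eventually_gt_nhds hni)
    have hlim : Tendsto (fun k => κ i * (μ i * p k i / ν i) ^ α * (ν i / μ i - Λ (p k) i))
        atTop (𝓝 (κ i * (μ i * n i / ν i) ^ α * (ν i / μ i - Λ n i))) := by
      rw [hfix i hni]
      refine Tendsto.mul ?_ (tendsto_const_nhds.sub (hLc i))
      refine Tendsto.const_mul (κ i) ?_
      exact (((hpc i).const_mul (μ i)).div_const (ν i)).rpow_const (Or.inr hα.le)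
    refine Tendsto.congr' ?_ hlim
    filter_upwards [hev] with k hk
    rw [if_pos hk]
  · rw [if_neg hni]
    have hni0 : n i = 0 := le_antisymm (not_lt.1 hni) (hn i)
    have hrpos : 0 < ν i / μ i := div_pos (hν i) (hμ i)
    refine squeeze_zero_norm (fun k => ?_)
      (a := fun k => κ i * (μ i * p k i / ν i) ^ α * (ν i / μ i + Cmax)) ?_
    · have hx0 : 0 ≤ (μ i * p k i / ν i) ^ α :=
        Real.rpow_nonneg (by have := (hμ i).le; have := hp0 k i; have := (hν i).le; positivity) α
      split_ifs with h
      · rw [Real.norm_eq_abs, abs_mul, abs_mul]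
        rw [abs_of_nonneg (hκ i).le, abs_of_nonneg hx0]
        refine mul_le_mul_of_nonneg_left ?_ (by have := (hκ i).le; positivity)
        rw [abs_le]
        constructor
        · have := hΛb k i
          linarith
        · have := hΛ0 k i
          linarith
      · simp only [norm_zero]
        have := (hκ i).le
        positivity
    · have hlim2 : Tendsto (fun k => κ i * (μ i * p k i / ν i) ^ α * (ν i / μ i + Cmax))
          atTop (𝓝 (κ i * (μ i * n i / ν i) ^ α * (ν i / μ i + Cmax))) := by
        refine Tendsto.mul_const _ (Tendsto.const_mul (κ i) ?_)
        exact (((hpc i).const_mul (μ i)).div_const (ν i)).rpow_const (Or.inr hα.le)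
      rw [hni0] at hlim2
      rw [show μ i * 0 / ν i = (0:ℝ) by ring] at hlim2
      rw [Real.zero_rpow hα.ne', mul_zero, zero_mul] at hlim2
      exact hlim2

end PartE

end S10

theorem stmt10 {I J : ℕ} (hI : 0 < I) (hJ : 0 < J)
    (A : Fin J → Fin I → ℝ) (hA01 : ∀ j i, A j i = 0 ∨ A j i = 1)
    (hAcol : ∀ i, ∃ j, A j i = 1) (hArank : LinearIndependent ℝ A)
    (C : Fin J → ℝ) (hC : ∀ j, 0 < C j)
    (α : ℝ) (hα : 0 < α) (κ : Fin I → ℝ) (hκ : ∀ i, 0 < κ i)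
    (ν μ : Fin I → ℝ) (hν : ∀ i, 0 < ν i) (hμ : ∀ i, 0 < μ i)
    (hload : ∀ j, (∑ i, A j i * (ν i / μ i)) ≤ C j)
    (hJs : (Jstar A C ν μ).Nonempty)
    (Λ : (Fin I → ℝ) → Fin I → ℝ)
    (hΛ : ∀ n : Fin I → ℝ, (∀ i, 0 ≤ n i) → IsAlloc A C α κ n (Λ n)) :
    ContinuousOn (Kfun α κ ν μ Λ) {n : Fin I → ℝ | ∀ i, 0 ≤ n i} ∧
    ∀ n : Fin I → ℝ, (∀ i, 0 ≤ n i) →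
      Kfun α κ ν μ Λ n ≤ 0 ∧
      ((¬ IsFluidSol A C ν μ Λ fun _ => n) → Kfun α κ ν μ Λ n < 0) := by
  classical
  have hJne : (Finset.univ : Finset (Fin J)).Nonempty := ⟨⟨0, hJ⟩, Finset.mem_univ _⟩
  set δ : ℝ := Finset.univ.inf' hJne C with hδdef
  have hδ : 0 < δ := (Finset.lt_inf'_iff hJne).2 fun j _ => hC j
  have hδC : ∀ j, δ ≤ C j := fun j => Finset.inf'_le _ (Finset.mem_univ j)
  constructor
  · -- continuity
    intro n hn
    have hn' : ∀ i, 0 ≤ n i := hn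
    show Tendsto (Kfun α κ ν μ Λ) (𝓝[{n : Fin I → ℝ | ∀ i, 0 ≤ n i}] n)
      (𝓝 (Kfun α κ ν μ Λ n))
    rw [Filter.tendsto_iff_seq_tendsto]
    intro u hu
    rw [tendsto_nhdsWithin_iff] at hu
    obtain ⟨hu1, hu2⟩ := hu
    set v : ℕ → Fin I → ℝ := fun k => if (∀ i, 0 ≤ u k i) then u k else n with hvdef
    have hv0 : ∀ k i, 0 ≤ v k i := by
      intro k i
      simp only [hvdef]
      split_ifs with h
      · exact h i
      · exact hn' i
    have hveq : ∀ᶠ k in atTop, v k = u k := by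
      filter_upwards [hu2] with k hk
      simp only [hvdef]
      rw [if_pos hk]
    have hv1 : Tendsto v atTop (𝓝 n) := hu1.congr' (hveq.mono fun k hk => hk.symm)
    have hmain : Tendsto (fun k => Kfun α κ ν μ Λ (v k)) atTop (𝓝 (Kfun α κ ν μ Λ n)) := by
      apply Filter.tendsto_of_subseq_tendsto
      intro ns hns
      have hbox : ∀ k, Λ (v (ns k)) ∈ Icc (0 : Fin I → ℝ) (fun i => C ((hAcol i).choose)) := by
        intro k
        rw [Set.mem_Icc]
        constructor
        · intro i
          exact (hΛ (v (ns k)) (hv0 (ns k))).1.1 i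
        · intro i
          exact S10.feas_bound hA01 (hΛ (v (ns k)) (hv0 (ns k))).1 (hAcol i).choose_spec
      obtain ⟨L, _, φ, hφ, hLtend⟩ := isCompact_Icc.tendsto_subseq hbox
      refine ⟨φ, ?_⟩
      have hp : Tendsto (fun k => v (ns (φ k))) atTop (𝓝 n) :=
        hv1.comp (hns.comp hφ.tendsto_atTop)
      have hLt : Tendsto (fun k => Λ (v (ns (φ k)))) atTop (𝓝 L) := hLtend
      exact S10.kfun_tendsto hI hJ hA01 hAcol hC hα hκ hν hμ hΛ hn'
        (fun k i => hv0 (ns (φ k)) i) hp hLt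
    refine hmain.congr' ?_
    filter_upwards [hveq] with k hk
    simp only [Function.comp_apply, hk]
  · -- nonpositivity and strict negativity
    intro n hn
    have halloc := hΛ n hn
    have hkv := S10.kfun_le_vi hα hA01 hδ hδC hκ hn hν hμ hload halloc
    refine ⟨hkv.1, fun hnf => ?_⟩
    have hcontr : ¬ ∀ i, 0 < n i → Λ n i = ν i / μ i := fun h =>
      hnf (S10.const_fluid hν hμ hn hload h)
    push_neg at hcontr
    obtain ⟨i0, hi0, hne⟩ := hcontr
    exact hkv.2 i0 hi0 hne
end
end

section
/- At any regular point t of a fluid model solution n(·), the composite function F∘n is differentiable at t and (d/dt) F(n(t)) = K(n(t)) ≤ 0, with strict inequality unless n(t) ∈ M_α. -/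
open Real Set

noncomputable section

lemma bernoulli_neg {p t : ℝ} (hp : p < 0) (ht : 0 < t) (ht1 : t ≠ 1) :
    1 + p * (t - 1) < t ^ p := by
  have h1 : t ^ p = Real.exp (p * Real.log t) := by rw [Real.rpow_def_of_pos ht, mul_comm]
  have h2 : p * Real.log t + 1 ≤ Real.exp (p * Real.log t) := Real.add_one_le_exp _
  have h3 : Real.log t < t - 1 := Real.log_lt_sub_one_of_pos ht ht1
  have h4 : p * (t - 1) < p * Real.log t := by
    exact mul_lt_mul_of_neg_left h3 hp
  rw [h1]; linarith

/-- Strict tangent-line inequality for the utility function. -/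
lemma tangent_lt {α r x : ℝ} (hα : 0 < α) (hr : 0 < r) (hx : 0 ≤ x)
    (hx1 : 1 ≤ α → 0 < x) (hne : x ≠ r) :
    r ^ (-α) * (r - x) <
      (if α = 1 then Real.log r - Real.log x
       else r ^ (1 - α) / (1 - α) - x ^ (1 - α) / (1 - α)) := by
  rcases lt_trichotomy α 1 with hlt | heq | hgt
  · rw [if_neg hlt.ne]
    have hp1 : (0:ℝ) < 1 - α := by linarith
    have hp2 : 1 - α < 1 := by linarith
    have hs : -1 ≤ x / r - 1 := by
      have : 0 ≤ x / r := div_nonneg hx hr.le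
      linarith
    have hs' : x / r - 1 ≠ 0 := by
      intro h
      apply hne
      have : x / r = 1 := by linarith
      field_simp at this; linarith
    have hb := rpow_one_add_lt_one_add_mul_self hs hs' hp1 hp2
    rw [show 1 + (x / r - 1) = x / r by ring] at hb
    rw [Real.div_rpow hx hr.le] at hb
    -- hb : x^(1-α) / r^(1-α) < 1 + (1-α) * (x/r - 1)
    have hrp : 0 < r ^ (1 - α) := Real.rpow_pos_of_pos hr _
    have hb2 : x ^ (1 - α) < r ^ (1 - α) * (1 + (1 - α) * (x / r - 1)) := by
      rw [div_lt_iff₀ hrp] at hb; linarith [hb]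
    have hkey : r ^ (1 - α) / r = r ^ (-α) := by
      rw [show (1 - α) = -α + 1 by ring, Real.rpow_add hr, Real.rpow_one]
      field_simp
    have hb3 : r ^ (1 - α) * (1 + (1 - α) * (x / r - 1))
        = r ^ (1 - α) + (1 - α) * (r ^ (-α) * x) - (1 - α) * (r ^ (-α) * r) := by
      rw [← hkey]; field_simp; ring
    rw [hb3] at hb2
    rw [← sub_div, lt_div_iff₀ hp1]
    nlinarith [hb2]
  · subst heq
    rw [if_pos rfl]
    have hx' : 0 < x := hx1 le_rfl
    have h1 : Real.log (x / r) < x / r - 1 :=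
      Real.log_lt_sub_one_of_pos (div_pos hx' hr) (by
        intro h; apply hne; field_simp at h; linarith)
    rw [Real.log_div hx'.ne' hr.ne'] at h1
    have h2 : r ^ (-(1:ℝ)) = r⁻¹ := Real.rpow_neg_one r
    rw [h2]
    have : r⁻¹ * (r - x) = 1 - x / r := by field_simp
    rw [this]; linarith [h1]
  · rw [if_neg hgt.ne']
    have hx' : 0 < x := hx1 hgt.le
    have hp : 1 - α < 0 := by linarith
    have ht : 0 < x / r := div_pos hx' hr
    have ht1 : x / r ≠ 1 := by
      intro h; apply hne; field_simp at h; linarith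
    have hb := bernoulli_neg hp ht ht1
    rw [Real.div_rpow hx hr.le] at hb
    have hrp : 0 < r ^ (1 - α) := Real.rpow_pos_of_pos hr _
    have hb2 : r ^ (1 - α) * (1 + (1 - α) * (x / r - 1)) < x ^ (1 - α) := by
      rw [lt_div_iff₀ hrp] at hb; linarith [hb]
    have hkey : r ^ (1 - α) / r = r ^ (-α) := by
      rw [show (1 - α) = -α + 1 by ring, Real.rpow_add hr, Real.rpow_one]
      field_simp
    have hb3 : r ^ (1 - α) * (1 + (1 - α) * (x / r - 1))
        = r ^ (1 - α) + (1 - α) * (r ^ (-α) * x) - (1 - α) * (r ^ (-α) * r) := by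
      rw [← hkey]; field_simp; ring
    rw [hb3] at hb2
    rw [← sub_div, lt_div_iff_of_neg hp]
    nlinarith [hb2]

lemma tangent_le {α r x : ℝ} (hα : 0 < α) (hr : 0 < r) (hx : 0 ≤ x)
    (hx1 : 1 ≤ α → 0 < x) :
    r ^ (-α) * (r - x) ≤
      (if α = 1 then Real.log r - Real.log x
       else r ^ (1 - α) / (1 - α) - x ^ (1 - α) / (1 - α)) := by
  rcases eq_or_ne x r with rfl | hne
  · simp
  · exact (tangent_lt hα hr hx hx1 hne).le

/-- Rewriting `Gfun` as a real sum when it is not `⊥`. -/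
lemma Gfun_eq {I : ℕ} (α : ℝ) (κ n L : Fin I → ℝ)
    (h : ¬(1 ≤ α ∧ ∃ i, 0 < n i ∧ L i = 0)) :
    Gfun α κ n L = ((∑ i, if 0 < n i then
        κ i * n i ^ α * (if α = 1 then Real.log (L i)
          else (L i) ^ (1 - α) / (1 - α)) else 0 : ℝ) : EReal) := by
  rw [Gfun, if_neg h]
  by_cases h1 : α = 1
  · subst h1
    rw [if_pos rfl]
    congr 1
    refine Finset.sum_congr rfl fun i _ => ?_
    simp [Real.rpow_one]
  · rw [if_neg h1]
    congr 1
    refine Finset.sum_congr rfl fun i _ => ?_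
    simp [h1, mul_div_assoc]

theorem stmt11 {I J : ℕ} (hI : 0 < I) (hJ : 0 < J)
    (A : Fin J → Fin I → ℝ) (hA01 : ∀ j i, A j i = 0 ∨ A j i = 1)
    (hAcol : ∀ i, ∃ j, A j i = 1) (hArank : LinearIndependent ℝ A)
    (C : Fin J → ℝ) (hC : ∀ j, 0 < C j)
    (α : ℝ) (hα : 0 < α) (κ : Fin I → ℝ) (hκ : ∀ i, 0 < κ i)
    (ν μ : Fin I → ℝ) (hν : ∀ i, 0 < ν i) (hμ : ∀ i, 0 < μ i)
    (hload : ∀ j, (∑ i, A j i * (ν i / μ i)) ≤ C j)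
    (hJs : (Jstar A C ν μ).Nonempty)
    (Λ : (Fin I → ℝ) → Fin I → ℝ)
    (hΛ : ∀ n : Fin I → ℝ, (∀ i, 0 ≤ n i) → IsAlloc A C α κ n (Λ n))
    (n : ℝ → Fin I → ℝ) (hsol : IsFluidSol A C ν μ Λ n)
    (t : ℝ) (ht : t ∈ Ici (0:ℝ))
    (hreg : ∀ i, DifferentiableWithinAt ℝ (fun s => n s i) (Ici 0) t) :
    HasDerivWithinAt (fun s => Ffun α κ ν μ (n s)) (Kfun α κ ν μ Λ (n t)) (Ici 0) t ∧
    Kfun α κ ν μ Λ (n t) ≤ 0 ∧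
    ((¬ IsFluidSol A C ν μ Λ fun _ => n t) → Kfun α κ ν μ Λ (n t) < 0) := by
  have hm : ∀ i, 0 ≤ n t i := hsol.2.1 t ht
  have hd := (hsol.2.2 t ht hreg).1
  -- derivative of each coordinate
  set d : Fin I → ℝ := fun i => if 0 < n t i then ν i - μ i * Λ (n t) i else 0 with hd_def
  have hdi : ∀ i, HasDerivWithinAt (fun s => n s i) (d i) (Ici 0) t := by
    intro i
    rcases (hm i).lt_or_eq with h | h
    · rw [show d i = ν i - μ i * Λ (n t) i from if_pos h]; exact (hd i).1 h
    · rw [show d i = 0 from if_neg (by rw [← h]; exact lt_irrefl 0)]; exact (hd i).2 h.symm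
  -- Part 1: the derivative of F ∘ n
  have hFder : HasDerivWithinAt (fun s => Ffun α κ ν μ (n s))
      (Kfun α κ ν μ Λ (n t)) (Ici 0) t := by
    have h1 : ∀ i ∈ (Finset.univ : Finset (Fin I)),
        HasDerivWithinAt
          (fun s => (1 / (α + 1) * (ν i * κ i * μ i ^ (α - 1))) * ((n s i / ν i) ^ (α + 1)))
          (if 0 < n t i then κ i * (μ i * n t i / ν i) ^ α * (ν i / μ i - Λ (n t) i) else 0)
          (Ici 0) t := by
      intro i _
      have hinner : HasDerivWithinAt (fun s => n s i / ν i) (d i / ν i) (Ici 0) t :=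
        (hdi i).div_const _
      have houter : HasDerivAt (fun x : ℝ => x ^ (α + 1))
          ((α + 1) * (n t i / ν i) ^ α) (n t i / ν i) := by
        have := Real.hasDerivAt_rpow_const (x := n t i / ν i) (p := α + 1)
          (Or.inr (by linarith))
        simpa [add_sub_cancel_right] using this
      have hcomp := houter.comp_hasDerivWithinAt t hinner
      have hmul := hcomp.const_mul (1 / (α + 1) * (ν i * κ i * μ i ^ (α - 1)))
      have hval : 1 / (α + 1) * (ν i * κ i * μ i ^ (α - 1)) * ((α + 1) * (n t i / ν i) ^ α * (d i / ν i))
          = (if 0 < n t i then κ i * (μ i * n t i / ν i) ^ α * (ν i / μ i - Λ (n t) i) else 0) := by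
        by_cases h : 0 < n t i
        · rw [hd_def]; simp only [if_pos h]
          have e1 : (μ i * n t i / ν i) ^ α = μ i ^ α * (n t i / ν i) ^ α := by
            rw [mul_div_assoc, Real.mul_rpow (hμ i).le (div_nonneg (le_of_lt h) (hν i).le)]
          have e2 : μ i ^ (α - 1) = μ i ^ α / μ i := by
            rw [Real.rpow_sub (hμ i), Real.rpow_one]
          rw [e1, e2]
          have hν' : ν i ≠ 0 := (hν i).ne'
          have hμ' : μ i ≠ 0 := (hμ i).ne'
          have hα' : α + 1 ≠ 0 := by positivity
          field_simp
        · rw [hd_def]; simp only [if_neg h]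
          have h0 : n t i = 0 := le_antisymm (not_lt.mp h) (hm i)
          rw [h0]
          simp
      rw [← hval]
      exact hmul
    have h2 := HasDerivWithinAt.fun_sum h1
    have hfun : (fun s => Ffun α κ ν μ (n s)) =
        (fun s => ∑ i, (1 / (α + 1) * (ν i * κ i * μ i ^ (α - 1))) * ((n s i / ν i) ^ (α + 1))) := by
      funext s
      rw [Ffun, Finset.mul_sum]
      exact Finset.sum_congr rfl fun i _ => by ring
    rw [Kfun, hfun]
    exact h2
  -- Optimality setup for parts 2 and 3
  have hρpos : ∀ i, 0 < ν i / μ i := fun i => div_pos (hν i) (hμ i)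
  set ρp : Fin I → ℝ := fun i => if 0 < n t i then ν i / μ i else 0 with hρp_def
  have hρp_feas : ρp ∈ Feasible A C (n t) := by
    refine ⟨fun i => ?_, fun i hi => ?_, fun j => ?_⟩
    · rw [hρp_def]; dsimp only; split_ifs
      · exact (hρpos i).le
      · exact le_rfl
    · rw [hρp_def]; dsimp only; rw [if_neg (by rw [hi]; exact lt_irrefl 0)]
    · refine le_trans (Finset.sum_le_sum fun i _ => ?_) (hload j)
      have hA : 0 ≤ A j i := by rcases hA01 j i with h | h <;> rw [h] <;> norm_num
      refine mul_le_mul_of_nonneg_left ?_ hA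
      rw [hρp_def]; dsimp only; split_ifs
      · exact le_rfl
      · exact (hρpos i).le
  have hΛfeas := (hΛ (n t) hm).1
  have hopt := (hΛ (n t) hm).2 ρp hρp_feas
  have hρp_nb : ¬(1 ≤ α ∧ ∃ i, 0 < n t i ∧ ρp i = 0) := by
    rintro ⟨-, i, hi, h0⟩
    rw [hρp_def] at h0; dsimp only at h0; rw [if_pos hi] at h0
    exact (hρpos i).ne' h0
  have hΛpos : ∀ i, 0 < n t i → 1 ≤ α → 0 < Λ (n t) i := by
    intro i hi h1
    rcases (hΛfeas.1 i).lt_or_eq with h | h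
    · exact h
    · exfalso
      have hbot : Gfun α κ (n t) (Λ (n t)) = ⊥ := by
        rw [Gfun, if_pos ⟨h1, i, hi, h.symm⟩]
      rw [Gfun_eq α κ (n t) ρp hρp_nb, hbot] at hopt
      exact (EReal.bot_lt_coe _).not_ge hopt
  have hΛ_nb : ¬(1 ≤ α ∧ ∃ i, 0 < n t i ∧ Λ (n t) i = 0) := by
    rintro ⟨h1, i, hi, h0⟩
    exact (hΛpos i hi h1).ne' h0
  rw [Gfun_eq α κ (n t) ρp hρp_nb, Gfun_eq α κ (n t) (Λ (n t)) hΛ_nb,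
    EReal.coe_le_coe_iff] at hopt
  -- termwise comparison
  set f : Fin I → ℝ := fun i =>
    if 0 < n t i then κ i * (μ i * n t i / ν i) ^ α * (ν i / μ i - Λ (n t) i) else 0 with hf_def
  set gρ : Fin I → ℝ := fun i => if 0 < n t i then
      κ i * n t i ^ α * (if α = 1 then Real.log (ρp i)
        else (ρp i) ^ (1 - α) / (1 - α)) else 0 with hgρ_def
  set gΛ : Fin I → ℝ := fun i => if 0 < n t i then
      κ i * n t i ^ α * (if α = 1 then Real.log (Λ (n t) i)
        else (Λ (n t) i) ^ (1 - α) / (1 - α)) else 0 with hgΛ_def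
  have hterm_lt : ∀ i, 0 < n t i → Λ (n t) i ≠ ν i / μ i → f i < gρ i - gΛ i := by
    intro i hi hne
    have hr := hρpos i
    have hx := hΛfeas.1 i
    have htan := tangent_lt hα hr hx (fun h1 => hΛpos i hi h1) hne
    have hc : 0 < κ i * n t i ^ α := mul_pos (hκ i) (Real.rpow_pos_of_pos hi _)
    have hmul := mul_lt_mul_of_pos_left htan hc
    have e1 : (μ i * n t i / ν i) ^ α = n t i ^ α * (ν i / μ i) ^ (-α) := by
      rw [show μ i * n t i / ν i = n t i * (ν i / μ i)⁻¹ by field_simp,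
        Real.mul_rpow (hm i) (inv_nonneg.mpr hr.le), Real.inv_rpow hr.le,
        ← Real.rpow_neg hr.le]
    rw [hf_def, hgρ_def, hgΛ_def]; dsimp only
    rw [if_pos hi, if_pos hi, if_pos hi, hρp_def]; dsimp only; rw [if_pos hi]
    rw [e1]
    calc κ i * (n t i ^ α * (ν i / μ i) ^ (-α)) * (ν i / μ i - Λ (n t) i)
        = κ i * n t i ^ α * ((ν i / μ i) ^ (-α) * (ν i / μ i - Λ (n t) i)) := by ring
      _ < κ i * n t i ^ α * (if α = 1 then Real.log (ν i / μ i) - Real.log (Λ (n t) i)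
            else (ν i / μ i) ^ (1 - α) / (1 - α) - (Λ (n t) i) ^ (1 - α) / (1 - α)) := hmul
      _ = κ i * n t i ^ α * (if α = 1 then Real.log (ν i / μ i)
            else (ν i / μ i) ^ (1 - α) / (1 - α)) -
          κ i * n t i ^ α * (if α = 1 then Real.log (Λ (n t) i)
            else (Λ (n t) i) ^ (1 - α) / (1 - α)) := by
          split_ifs <;> ring
  have hterm_le : ∀ i, f i ≤ gρ i - gΛ i := by
    intro i
    by_cases hi : 0 < n t i
    · rcases eq_or_ne (Λ (n t) i) (ν i / μ i) with heq | hne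
      · -- equality case : both sides equal
        rw [hf_def, hgρ_def, hgΛ_def]; dsimp only
        rw [if_pos hi, if_pos hi, if_pos hi, hρp_def]; dsimp only; rw [if_pos hi, heq]
        simp
      · exact (hterm_lt i hi hne).le
    · rw [hf_def, hgρ_def, hgΛ_def]; dsimp only
      rw [if_neg hi, if_neg hi, if_neg hi]; simp
  have hKf : Kfun α κ ν μ Λ (n t) = ∑ i, f i := by
    rw [Kfun, hf_def]
  have hsum_le : ∑ i, (gρ i - gΛ i) ≤ 0 := by
    rw [Finset.sum_sub_distrib]
    have : ∑ i, gρ i ≤ ∑ i, gΛ i := hopt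
    linarith
  have hKle : Kfun α κ ν μ Λ (n t) ≤ 0 := by
    rw [hKf]
    exact le_trans (Finset.sum_le_sum fun i _ => hterm_le i) hsum_le
  have hKlt : (∃ i, 0 < n t i ∧ Λ (n t) i ≠ ν i / μ i) → Kfun α κ ν μ Λ (n t) < 0 := by
    rintro ⟨i0, hi0, hne0⟩
    rw [hKf]
    refine lt_of_lt_of_le (Finset.sum_lt_sum (fun i _ => hterm_le i)
      ⟨i0, Finset.mem_univ i0, hterm_lt i0 hi0 hne0⟩) hsum_le
  refine ⟨hFder, hKle, fun hnfs => ?_⟩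
  by_cases hall : ∀ i, 0 < n t i → Λ (n t) i = ν i / μ i
  · exfalso
    apply hnfs
    refine ⟨fun i => ?_, fun s _ i => hm i, fun s hs hdiff => ⟨fun i => ⟨?_, ?_⟩, fun j => ?_⟩⟩
    · intro T hT ε hε
      exact ⟨1, one_pos, fun m a b _ _ _ => by simpa using hε⟩
    · intro hi
      have h0 : ν i - μ i * Λ ((fun _ => n t) s) i = 0 := by
        show ν i - μ i * Λ (n t) i = 0
        rw [hall i hi, mul_comm, div_mul_cancel₀ (ν i) (hμ i).ne', sub_self]
      rw [h0]
      exact hasDerivWithinAt_const s (Ici 0) (n t i)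
    · intro _
      exact hasDerivWithinAt_const s (Ici 0) (n t i)
    · have : ∀ i, A j i * (if 0 < (fun _ => n t) s i then Λ ((fun _ => n t) s) i else ν i / μ i)
          = A j i * (ν i / μ i) := by
        intro i
        show A j i * (if 0 < n t i then Λ (n t) i else ν i / μ i) = _
        split_ifs with h
        · rw [hall i h]
        · rfl
      calc ∑ i, A j i * (if 0 < (fun _ => n t) s i then Λ ((fun _ => n t) s) i else ν i / μ i)
          = ∑ i, A j i * (ν i / μ i) := Finset.sum_congr rfl fun i _ => this i
        _ ≤ C j := hload j
  · push_neg at hall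
    exact hKlt hall
end
end

section
/- For any fluid model solution n(·) and any j ∈ J*, the function t ↦ w_j(n(t)) is nondecreasing on [0,∞). -/
open Real Set

noncomputable section

open Topology Filter in
lemma evar_chunk {f : ℝ → ℝ} {T δ : ℝ}
    (hAC : ∀ (m : ℕ) (a b : Fin m → ℝ),
      (∀ k, 0 ≤ a k ∧ a k ≤ b k ∧ b k ≤ T) →
      (∀ k l, k < l → b k ≤ a l ∨ b l ≤ a k) →
      (∑ k, (b k - a k)) < δ → (∑ k, |f (b k) - f (a k)|) < 1)
    {c d : ℝ} (hc : 0 ≤ c) (hdT : d ≤ T) (hlen : d - c < δ) :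
    eVariationOn f (Icc c d) ≤ 1 := by
  apply iSup_le
  rintro ⟨m, u, hu, us⟩
  rcases Nat.eq_zero_or_pos m with rfl | hm
  · simp
  have hmem : ∀ i, u i ∈ Icc c d := us
  have key : (∑ k : Fin m, |f (u (k.val+1)) - f (u k.val)|) < 1 := by
    apply hAC m (fun k => u k.val) (fun k => u (k.val+1))
    · intro k
      exact ⟨hc.trans (hmem k.val).1, hu (Nat.le_succ _), (hmem _).2.trans hdT⟩
    · intro k l hkl
      exact Or.inl (hu (by omega : (k.val+1) ≤ l.val))
    · have : (∑ k : Fin m, (u (k.val+1) - u k.val)) = u m - u 0 := by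
        rw [Fin.sum_univ_eq_sum_range (fun k => u (k+1) - u k)]
        exact Finset.sum_range_sub u m
      rw [this]
      have h1 := (hmem m).2
      have h2 := (hmem 0).1
      linarith
  calc (∑ i ∈ Finset.range m, edist (f (u (i + 1))) (f (u i)))
      = ENNReal.ofReal (∑ k : Fin m, |f (u (k.val+1)) - f (u k.val)|) := by
        rw [ENNReal.ofReal_sum_of_nonneg (fun k _ => abs_nonneg _),
          Fin.sum_univ_eq_sum_range (fun k => ENNReal.ofReal |f (u (k+1)) - f (u k)|)]
        refine Finset.sum_congr rfl fun i _ => ?_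
        rw [edist_dist, Real.dist_eq]
    _ ≤ ENNReal.ofReal 1 := ENNReal.ofReal_le_ofReal key.le
    _ = 1 := ENNReal.ofReal_one


lemma AbsContNonneg.lbv (hf : AbsContNonneg f) : LocallyBoundedVariationOn f (Ici 0) := by
  intro a b _ _
  set T : ℝ := max b 1 with hT
  have hT0 : 0 < T := lt_of_lt_of_le one_pos (le_max_right _ _)
  obtain ⟨δ, hδ0, hAC⟩ := hf T hT0 1 one_pos
  have main : ∀ k : ℕ, ∀ c d : ℝ, 0 ≤ c → c ≤ d → d ≤ T → d - c ≤ k * (δ/2) →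
      eVariationOn f (Icc c d) ≤ k := by
    intro k
    induction k with
    | zero =>
      intro c d hc hcd hdT hlen
      have : d = c := by simp at hlen; linarith
      subst this
      have : eVariationOn f (Icc d d) = 0 :=
        eVariationOn.subsingleton f (by simp [Set.Icc_self])
      simp [this]
    | succ k ih =>
      intro c d hc hcd hdT hlen
      set e : ℝ := max c (d - δ/2) with he
      have hce : c ≤ e := le_max_left _ _
      have hed : e ≤ d := by
        apply max_le hcd; linarith
      have h1 : eVariationOn f (Icc c e) ≤ k := by
        apply ih c e hc hce (hed.trans hdT)
        have hk0 : (0:ℝ) ≤ (k:ℝ) * (δ/2) := by positivity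
        push_cast at hlen
        have : e ≤ c + (k:ℝ)*(δ/2) := max_le (by linarith) (by linarith)
        linarith
      have h2 : eVariationOn f (Icc e d) ≤ 1 :=
        evar_chunk hAC (hc.trans hce) hdT (by have := le_max_right c (d - δ/2); linarith)
      have hsplit := eVariationOn.Icc_add_Icc f (s := univ) hce hed (mem_univ e)
      simp only [Set.univ_inter] at hsplit
      rw [← hsplit]
      refine le_trans (add_le_add h1 h2) (le_of_eq ?_)
      push_cast
      ring
  obtain ⟨k, hk⟩ := exists_nat_gt (2 * T / δ)
  have hsub : Ici (0:ℝ) ∩ Icc a b ⊆ Icc 0 T :=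
    fun x hx => ⟨hx.1, hx.2.2.trans (le_max_left _ _)⟩
  have : eVariationOn f (Ici (0:ℝ) ∩ Icc a b) ≤ k := by
    refine le_trans (eVariationOn.mono f hsub) ?_
    apply main k 0 T le_rfl hT0.le le_rfl
    rw [div_lt_iff₀ hδ0] at hk
    nlinarith
  exact ne_top_of_le_ne_top (ENNReal.natCast_ne_top k) this


lemma AC_w {I J : ℕ} (hI : 0 < I) (A : Fin J → Fin I → ℝ)
    (hA01 : ∀ j i, A j i = 0 ∨ A j i = 1) (μ : Fin I → ℝ) (hμ : ∀ i, 0 < μ i)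
    (n : ℝ → Fin I → ℝ) (hAC : ∀ i, AbsContNonneg fun t => n t i) (j : Fin J) :
    AbsContNonneg fun t => ∑ i, A j i * n t i / μ i := by
  have hne : (Finset.univ : Finset (Fin I)).Nonempty := by
    simpa [Finset.univ_nonempty_iff, ← Fin.pos_iff_nonempty] using hI
  intro T hT ε hε
  have H : ∀ i : Fin I, ∃ δ > (0:ℝ), ∀ (m : ℕ) (p q : Fin m → ℝ),
      (∀ k, 0 ≤ p k ∧ p k ≤ q k ∧ q k ≤ T) →
      (∀ k l, k < l → q k ≤ p l ∨ q l ≤ p k) →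
      (∑ k, (q k - p k)) < δ → (∑ k, |n (q k) i - n (p k) i|) < ε * μ i / I := by
    intro i
    exact hAC i T hT (ε * μ i / I) (div_pos (mul_pos hε (hμ i)) (by exact_mod_cast hI))
  choose δ hδ0 hδ using H
  refine ⟨Finset.univ.inf' hne δ, ?_, ?_⟩
  · simp only [gt_iff_lt, Finset.lt_inf'_iff]
    exact fun i _ => hδ0 i
  intro m p q h1 h2 h3
  have key : ∀ k : Fin m, |(∑ i, A j i * n (q k) i / μ i) - ∑ i, A j i * n (p k) i / μ i|
      ≤ ∑ i, (1 / μ i) * |n (q k) i - n (p k) i| := by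
    intro k
    rw [← Finset.sum_sub_distrib]
    refine (Finset.abs_sum_le_sum_abs _ _).trans (Finset.sum_le_sum fun i _ => ?_)
    have : A j i * n (q k) i / μ i - A j i * n (p k) i / μ i
        = (A j i / μ i) * (n (q k) i - n (p k) i) := by ring
    rw [this, abs_mul]
    have hA : |A j i / μ i| ≤ 1 / μ i := by
      have h0 : (0:ℝ) < 1 / μ i := one_div_pos.2 (hμ i)
      rcases hA01 j i with h | h
      · rw [h]; simpa using h0.le
      · rw [h, abs_of_nonneg h0.le]
    exact mul_le_mul_of_nonneg_right hA (abs_nonneg _)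
  calc (∑ k, |(fun t => ∑ i, A j i * n t i / μ i) (q k) - (fun t => ∑ i, A j i * n t i / μ i) (p k)|)
      ≤ ∑ k, ∑ i, (1 / μ i) * |n (q k) i - n (p k) i| := Finset.sum_le_sum fun k _ => key k
    _ = ∑ i, (1 / μ i) * ∑ k, |n (q k) i - n (p k) i| := by
        rw [Finset.sum_comm]
        exact Finset.sum_congr rfl fun i _ => by rw [Finset.mul_sum]
    _ < ∑ i : Fin I, (1 / μ i) * (ε * μ i / I) := by
        refine Finset.sum_lt_sum_of_nonempty hne fun i _ => ?_
        refine mul_lt_mul_of_pos_left ?_ (one_div_pos.2 (hμ i))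
        refine hδ i m p q h1 h2 (lt_of_lt_of_le h3 ?_)
        exact Finset.inf'_le _ (Finset.mem_univ i)
    _ = ε := by
        have hI0 : (I:ℝ) ≠ 0 := ne_of_gt (by exact_mod_cast hI)
        have : ∀ i : Fin I, (1 / μ i) * (ε * μ i / I) = ε / I := by
          intro i
          have hμ0 : (μ i) ≠ 0 := ne_of_gt (hμ i)
          field_simp
        rw [Finset.sum_congr rfl fun i _ => this i, Finset.sum_const, Finset.card_univ,
          Fintype.card_fin, nsmul_eq_mul]
        field_simp



lemma AbsContNonneg.uc {f : ℝ → ℝ} (hf : AbsContNonneg f) {T : ℝ} (hT : 0 < T) {ε : ℝ}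
    (hε : 0 < ε) :
    ∃ δ > (0:ℝ), ∀ x ∈ Icc (0:ℝ) T, ∀ y ∈ Icc (0:ℝ) T, |x - y| < δ → |f x - f y| < ε := by
  obtain ⟨δ, hδ0, H⟩ := hf T hT ε hε
  refine ⟨δ, hδ0, fun x hx y hy hxy => ?_⟩
  have := H 1 (fun _ => min x y) (fun _ => max x y)
    (fun _ => ⟨le_min hx.1 hy.1, min_le_max, max_le hx.2 hy.2⟩)
    (fun k l hkl => absurd hkl (by omega))
    (by simpa [max_sub_min_eq_abs, abs_sub_comm] using hxy)
  simp only [Fin.sum_univ_one] at this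
  rcases le_total x y with h | h
  · rw [max_eq_right h, min_eq_left h] at this
    rwa [abs_sub_comm]
  · rwa [max_eq_left h, min_eq_right h] at this


lemma deriv_nonneg_aux {I J : ℕ} {A : Fin J → Fin I → ℝ}
    {C : Fin J → ℝ} {ν μ : Fin I → ℝ} (hμ : ∀ i, 0 < μ i)
    {Λ : (Fin I → ℝ) → Fin I → ℝ} {n : ℝ → Fin I → ℝ}
    (hsol : IsFluidSol A C ν μ Λ n) (j : Fin J) (hj : j ∈ Jstar A C ν μ)
    {t : ℝ} (ht : 0 ≤ t) (hdiff : ∀ i, DifferentiableWithinAt ℝ (fun s => n s i) (Ici 0) t) :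
    ∃ d, 0 ≤ d ∧ HasDerivWithinAt (fun s => ∑ i, A j i * n s i / μ i) d (Ici 0) t := by
  obtain ⟨hder, hcap⟩ := hsol.2.2 t ht hdiff
  set D : Fin I → ℝ := fun i => if 0 < n t i then ν i - μ i * Λ (n t) i else 0 with hD
  have hD' : ∀ i, HasDerivWithinAt (fun s => n s i) (D i) (Ici 0) t := by
    intro i
    by_cases h : 0 < n t i
    · simpa [hD, h] using (hder i).1 h
    · have h0 : n t i = 0 := le_antisymm (not_lt.1 h) (hsol.2.1 t ht i)
      simpa [hD, h] using (hder i).2 h0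
  refine ⟨∑ i, A j i * D i / μ i, ?_, ?_⟩
  · have key : ∀ i : Fin I, A j i * D i / μ i
        = A j i * (ν i / μ i) - A j i * (if 0 < n t i then Λ (n t) i else ν i / μ i) := by
      intro i
      have hμ0 : μ i ≠ 0 := ne_of_gt (hμ i)
      by_cases h : 0 < n t i <;> simp only [hD, h, if_true, if_false, if_pos, if_neg]
      · field_simp
      · simp [h]
    rw [Finset.sum_congr rfl fun i _ => key i, Finset.sum_sub_distrib]
    have h1 := hcap j
    have h2 : ∑ i, A j i * (ν i / μ i) = C j := hj
    linarith
  · have H : ∀ i : Fin I, HasDerivWithinAt (fun s => A j i * n s i / μ i)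
        (A j i * D i / μ i) (Ici 0) t := by
      intro i
      have := (hD' i).const_mul (A j i / μ i)
      simpa only [div_mul_eq_mul_div] using this
    exact HasDerivWithinAt.fun_sum fun i _ => H i


open Topology Filter in
theorem stmt12 {I J : ℕ} (hI : 0 < I) (hJ : 0 < J)
    (A : Fin J → Fin I → ℝ) (hA01 : ∀ j i, A j i = 0 ∨ A j i = 1)
    (hAcol : ∀ i, ∃ j, A j i = 1) (hArank : LinearIndependent ℝ A)
    (C : Fin J → ℝ) (hC : ∀ j, 0 < C j)
    (α : ℝ) (hα : 0 < α) (κ : Fin I → ℝ) (hκ : ∀ i, 0 < κ i)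
    (ν μ : Fin I → ℝ) (hν : ∀ i, 0 < ν i) (hμ : ∀ i, 0 < μ i)
    (hload : ∀ j, (∑ i, A j i * (ν i / μ i)) ≤ C j)
    (hJs : (Jstar A C ν μ).Nonempty)
    (Λ : (Fin I → ℝ) → Fin I → ℝ)
    (hΛ : ∀ n : Fin I → ℝ, (∀ i, 0 ≤ n i) → IsAlloc A C α κ n (Λ n))
    (n : ℝ → Fin I → ℝ) (hsol : IsFluidSol A C ν μ Λ n)
    (j : Fin J) (hj : j ∈ Jstar A C ν μ) :
    MonotoneOn (fun t => ∑ i, A j i * n t i / μ i) (Ici (0:ℝ)) := by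
  intro a ha b hb hab
  rcases eq_or_lt_of_le hab with rfl | hlt
  · exact le_rfl
  have ha0 : (0:ℝ) ≤ a := ha
  have hb0 : (0:ℝ) < b := lt_of_le_of_lt ha0 hlt
  set w : ℝ → ℝ := fun t => ∑ i, A j i * n t i / μ i with hwdef
  show w a ≤ w b
  clear_value w
  refine _root_.le_of_forall_pos_le_add fun ρ hρ => ?_
  set ε : ℝ := ρ / (b - a + 2) with hεdef
  have hεpos : 0 < ε := div_pos hρ (by linarith)
  have hwAC : AbsContNonneg w := by rw [hwdef]; exact AC_w hI A hA01 μ hμ n hsol.1 j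
  obtain ⟨δ, hδ0, hδ⟩ := hwAC b hb0 ε hεpos
  have haeAll : ∀ᵐ x, ∀ i, x ∈ Ici (0:ℝ) →
      DifferentiableWithinAt ℝ (fun s => n s i) (Ici 0) x :=
    MeasureTheory.ae_all_iff.2 fun i =>
      ((hsol.1 i).lbv).ae_differentiableWithinAt_of_mem_real
  set N : Set ℝ :=
    {x | x ∈ Icc a b ∧ ¬ ∀ i, DifferentiableWithinAt ℝ (fun s => n s i) (Ici 0) x} with hNdef
  have hNnull : MeasureTheory.volume N = 0 := by
    rw [MeasureTheory.ae_iff] at haeAll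
    refine MeasureTheory.measure_mono_null ?_ haeAll
    intro x hx
    simp only [Set.mem_setOf_eq, not_forall]
    have hx2 := hx.2
    push_neg at hx2
    obtain ⟨i, hi⟩ := hx2
    exact ⟨i, ha0.trans hx.1.1, hi⟩
  obtain ⟨U, hNU, hUopen, hUvol⟩ := Set.exists_isOpen_lt_of_lt N (ENNReal.ofReal δ)
    (by rw [hNnull]; exact ENNReal.ofReal_pos.2 hδ0)
  set g : ℝ → ℝ := fun t => w t + ε * t with hgdef
  clear_value g
  set S : Set ℝ := {x | x ∈ Icc a b ∧ ∀ χ > (0:ℝ), ∃ (m : ℕ) (p q : Fin m → ℝ),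
    (∀ k, a ≤ p k ∧ p k ≤ q k ∧ q k ≤ x) ∧
    (∀ k l, k < l → q k ≤ p l ∨ q l ≤ p k) ∧
    (∀ k, Ico (p k) (q k) ⊆ U) ∧
    g a - (∑ k, (g (p k) - g (q k))) - χ ≤ g x} with hSdef
  have haS : a ∈ S := by
    refine ⟨left_mem_Icc.2 hab, fun χ hχ =>
      ⟨0, Fin.elim0, Fin.elim0, fun k => k.elim0, fun k => k.elim0, fun k => k.elim0, ?_⟩⟩
    simp only [Finset.univ_eq_empty, Finset.sum_empty]
    linarith
  have hSb : ∀ x ∈ S, x ≤ b := fun x hx => hx.1.2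
  have hSne : S.Nonempty := ⟨a, haS⟩
  have hSbdd : BddAbove S := ⟨b, fun x hx => hSb x hx⟩
  set s := sSup S with hsdef
  have has : a ≤ s := le_csSup hSbdd haS
  have hsb : s ≤ b := csSup_le hSne hSb
  have hs0 : (0:ℝ) ≤ s := ha0.trans has
  have hsS : s ∈ S := by
    refine ⟨⟨has, hsb⟩, fun χ hχ => ?_⟩
    obtain ⟨dc, hdc0, hUC⟩ := hwAC.uc hb0 (show (0:ℝ) < χ/4 by linarith)
    obtain ⟨x, hxS, hxgt⟩ := exists_lt_of_lt_csSup hSne (by linarith : s - dc < s)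
    have hxle : x ≤ s := le_csSup hSbdd hxS
    obtain ⟨m, p, q, h1, h2, h3, h4⟩ := hxS.2 (χ/2) (by linarith)
    refine ⟨m, p, q, fun k => ⟨(h1 k).1, (h1 k).2.1, (h1 k).2.2.trans hxle⟩, h2, h3, ?_⟩
    have hwx : |w x - w s| < χ/4 := by
      apply hUC x ⟨ha0.trans hxS.1.1, hxS.1.2⟩ s ⟨hs0, hsb⟩
      rw [abs_of_nonpos (by linarith)]
      linarith
    have h5 : w x - w s < χ/4 := (abs_lt.1 hwx).2
    have hgs : g x - χ/2 ≤ g s := by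
      simp only [hgdef]
      have hmul : 0 ≤ ε * (s - x) := mul_nonneg hεpos.le (sub_nonneg.2 hxle)
      nlinarith
    linarith
  have hsmax : ∀ x ∈ S, x ≤ s := fun x hx => le_csSup hSbdd hx
  have hsb' : s = b := by
    by_contra hne
    have hslt : s < b := lt_of_le_of_ne hsb hne
    by_cases hD : ∀ i, DifferentiableWithinAt ℝ (fun u => n u i) (Ici 0) s
    · obtain ⟨d, hd0, hder⟩ := deriv_nonneg_aux hμ hsol j hj hs0 hD
      have hder' : HasDerivWithinAt w d (Ici 0) s := by rw [hwdef]; exact hder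
      have hgder : HasDerivWithinAt g (d + ε) (Ici 0) s := by
        have h2 : HasDerivWithinAt (fun t : ℝ => ε * t) ε (Ici 0) s := by
          simpa using (hasDerivWithinAt_id s (Ici 0)).const_mul ε
        rw [hgdef]
        exact hder'.add h2
      have hmono : HasDerivWithinAt g (d + ε) (Ioi s) s :=
        hgder.mono fun x hx => le_trans hs0 (le_of_lt hx)
      rw [hasDerivWithinAt_iff_tendsto_slope] at hmono
      have hsn : (Ioi s) \ {s} = Ioi s := by simp
      rw [hsn] at hmono
      have hev1 : ∀ᶠ t in 𝓝[>] s, 0 < slope g s t :=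
        hmono.eventually (eventually_gt_nhds (by linarith))
      have hev2 : ∀ᶠ t in 𝓝[>] s, t < b :=
        eventually_nhdsWithin_of_eventually_nhds (eventually_lt_nhds hslt)
      obtain ⟨t, ⟨hts, htb⟩, htI⟩ := ((hev1.and hev2).and eventually_mem_nhdsWithin).exists
      have htpos : 0 < t - s := sub_pos.2 htI
      have hgt : g s ≤ g t := by
        rw [slope_def_field] at hts
        rcases div_pos_iff.1 hts with ⟨h1, _⟩ | ⟨_, h2⟩
        · linarith
        · linarith
      have htS : t ∈ S := by
        refine ⟨⟨has.trans (le_of_lt htI), htb.le⟩, fun χ hχ => ?_⟩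
        obtain ⟨m, p, q, h1, h2, h3, h4⟩ := hsS.2 χ hχ
        exact ⟨m, p, q, fun k => ⟨(h1 k).1, (h1 k).2.1, (h1 k).2.2.trans (le_of_lt htI)⟩,
          h2, h3, by linarith⟩
      exact absurd (hsmax t htS) (not_le.2 htI)
    · have hsN : s ∈ N := ⟨⟨has, hsb⟩, hD⟩
      have hsU : s ∈ U := hNU hsN
      obtain ⟨r, hr0, hball⟩ := Metric.isOpen_iff.1 hUopen s hsU
      set t : ℝ := min (s + r/2) b with htdef
      have hst : s < t := lt_min (by linarith) hslt
      have htb : t ≤ b := min_le_right _ _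
      have hIco : Ico s t ⊆ U := by
        intro x hx
        apply hball
        rw [Metric.mem_ball, Real.dist_eq, abs_of_nonneg (sub_nonneg.2 hx.1)]
        have : x < s + r/2 := lt_of_lt_of_le hx.2 (min_le_left _ _)
        linarith
      have htS : t ∈ S := by
        refine ⟨⟨has.trans hst.le, htb⟩, fun χ hχ => ?_⟩
        obtain ⟨m, p, q, h1, h2, h3, h4⟩ := hsS.2 χ hχ
        refine ⟨m+1, Fin.snoc p s, Fin.snoc q t, ?_, ?_, ?_, ?_⟩
        · intro k
          refine Fin.lastCases ?_ ?_ k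
          · simp only [Fin.snoc_last]
            exact ⟨has, hst.le, le_rfl⟩
          · intro k'
            simp only [Fin.snoc_castSucc]
            exact ⟨(h1 k').1, (h1 k').2.1, (h1 k').2.2.trans hst.le⟩
        · intro k l hkl
          rcases Fin.eq_castSucc_or_eq_last l with ⟨l', rfl⟩ | rfl
          · rcases Fin.eq_castSucc_or_eq_last k with ⟨k', rfl⟩ | rfl
            · simp only [Fin.snoc_castSucc]
              exact h2 k' l' (by simpa using hkl)
            · exact absurd hkl (lt_asymm (Fin.castSucc_lt_last l'))
          · rcases Fin.eq_castSucc_or_eq_last k with ⟨k', rfl⟩ | rfl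
            · simp only [Fin.snoc_castSucc, Fin.snoc_last]
              exact Or.inl (h1 k').2.2
            · exact absurd hkl (lt_irrefl _)
        · intro k
          refine Fin.lastCases ?_ ?_ k
          · simp only [Fin.snoc_last]
            exact hIco
          · intro k'
            simp only [Fin.snoc_castSucc]
            exact h3 k'
        · rw [Fin.sum_univ_castSucc]
          simp only [Fin.snoc_castSucc, Fin.snoc_last]
          linarith
      exact absurd (hsmax t htS) (not_le.2 hst)
  have hbS : b ∈ S := hsb' ▸ hsS
  obtain ⟨m, p, q, h1, h2, h3, h4⟩ := hbS.2 ε hεpos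
  have hdisj : ∀ k l : Fin m, k ≠ l → Disjoint (Ico (p k) (q k)) (Ico (p l) (q l)) := by
    intro k l hkl
    rcases hkl.lt_or_gt with h | h
    · rcases h2 k l h with hc | hc
      · exact Set.Ico_disjoint_Ico.2 ((min_le_left _ _).trans (hc.trans (le_max_right _ _)))
      · exact Set.Ico_disjoint_Ico.2 ((min_le_right _ _).trans (hc.trans (le_max_left _ _)))
    · rcases h2 l k h with hc | hc
      · exact Set.Ico_disjoint_Ico.2 ((min_le_right _ _).trans (hc.trans (le_max_left _ _)))
      · exact Set.Ico_disjoint_Ico.2 ((min_le_left _ _).trans (hc.trans (le_max_right _ _)))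
  have hlen : (∑ k, (q k - p k)) < δ := by
    have hbiu := MeasureTheory.measure_biUnion_finset (μ := MeasureTheory.volume) (s := Finset.univ) (f := fun k => Ico (p k) (q k))
      (fun k _ l _ hkl => hdisj k l hkl) (fun k _ => measurableSet_Ico (a := p k) (b := q k))
    have hle : (∑ k, ENNReal.ofReal (q k - p k)) < ENNReal.ofReal δ := by
      calc (∑ k, ENNReal.ofReal (q k - p k))
          = MeasureTheory.volume (⋃ k ∈ Finset.univ, Ico (p k) (q k)) := by
            rw [hbiu]
            exact (Finset.sum_congr rfl fun k _ => (Real.volume_Ico).symm)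
        _ ≤ MeasureTheory.volume U := by
            apply MeasureTheory.measure_mono
            simp only [Finset.mem_univ, Set.iUnion_true]
            exact Set.iUnion_subset fun k => h3 k
        _ < ENNReal.ofReal δ := hUvol
    rw [← ENNReal.ofReal_sum_of_nonneg (fun k _ => sub_nonneg.2 (h1 k).2.1)] at hle
    exact (ENNReal.ofReal_lt_ofReal_iff hδ0).1 hle
  have hsumw : (∑ k, |w (q k) - w (p k)|) < ε :=
    hδ m p q (fun k => ⟨ha0.trans (h1 k).1, (h1 k).2.1, (h1 k).2.2⟩) h2 hlen
  have hdrop : (∑ k, (g (p k) - g (q k))) ≤ ∑ k, |w (q k) - w (p k)| := by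
    refine Finset.sum_le_sum fun k _ => ?_
    have h5 : p k ≤ q k := (h1 k).2.1
    have habs : w (p k) - w (q k) ≤ |w (q k) - w (p k)| := by
      rw [abs_sub_comm]; exact le_abs_self _
    have hmul : 0 ≤ ε * (q k - p k) := mul_nonneg hεpos.le (sub_nonneg.2 h5)
    simp only [hgdef]
    nlinarith
  have hkey : g a - 2*ε ≤ g b := by linarith
  have hεmul : ε * (b - a + 2) = ρ := by
    rw [hεdef]
    exact div_mul_cancel₀ ρ (by linarith)
  have hexp : ε * (b - a + 2) = ε*b - ε*a + 2*ε := by ring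
  simp only [hgdef] at hkey
  linarith
end
end

section
/- For each w ∈ ℝ₊^{J*}, a vector n ∈ ℝ₊^I is the unique optimal solution of the problem of minimizing F over {n ≥ 0 : Σ_i A_{ji} n_i/μ_i ≥ w_j for all j ∈ J*} if and only if there exists p ∈ ℝ₊^{J*} such that: (i) n_i = ρ_i ((Σ_{j∈J*} p_j A_{ji}) / κ_i)^{1/α} for every route i; (ii) p_j (Σ_i A_{ji} n_i/μ_i − w_j) = 0 for every j ∈ J*; and (iii) Σ_i A_{ji} n_i/μ_i ≥ w_j for every j ∈ J*. -/
open Real Set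

noncomputable section

/-- Gradient inequality for the convex function `x ↦ x ^ (α+1)` on `[0,∞)`. -/
lemma gradA {α : ℝ} (hα : 0 < α) {x y : ℝ} (hx : 0 ≤ x) (hy : 0 ≤ y) :
    x ^ (α + 1) + (α + 1) * x ^ α * (y - x) ≤ y ^ (α + 1) := by
  rcases eq_or_lt_of_le hx with h0 | hxpos
  · rw [← h0, Real.zero_rpow (by positivity : α + 1 ≠ 0), Real.zero_rpow hα.ne']
    simpa using Real.rpow_nonneg hy (α + 1)
  · have hs : -1 ≤ y / x - 1 := by
      have : 0 ≤ y / x := div_nonneg hy hx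
      linarith
    have hp : (1 : ℝ) ≤ α + 1 := by linarith
    have key := one_add_mul_self_le_rpow_one_add hs hp
    have h1 : 1 + (y / x - 1) = y / x := by ring
    rw [h1] at key
    have hxp : (0 : ℝ) < x ^ (α + 1) := Real.rpow_pos_of_pos hxpos _
    have key2 := mul_le_mul_of_nonneg_left key hxp.le
    have h2 : x ^ (α + 1) * (y / x) ^ (α + 1) = y ^ (α + 1) := by
      rw [← Real.mul_rpow hxpos.le (div_nonneg hy hxpos.le)]
      rw [mul_div_cancel₀ _ hxpos.ne']
    have h3 : x ^ (α + 1) * (1 + (α + 1) * (y / x - 1))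
        = x ^ (α + 1) + (α + 1) * x ^ α * (y - x) := by
      rw [Real.rpow_add_one hxpos.ne' α]
      field_simp
    rw [h2, h3] at key2
    exact key2

/-- Backward direction: a KKT point is a minimizer. -/
lemma kkt_to_min {I J : ℕ} (A : Fin J → Fin I → ℝ) (hA01 : ∀ j i, A j i = 0 ∨ A j i = 1)
    (C : Fin J → ℝ) {α : ℝ} (hα : 0 < α) (κ : Fin I → ℝ) (hκ : ∀ i, 0 < κ i)
    (ν μ : Fin I → ℝ) (hν : ∀ i, 0 < ν i) (hμ : ∀ i, 0 < μ i)
    (w : Fin J → ℝ) (n : Fin I → ℝ) (p : Fin J → ℝ)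
    (hp0 : ∀ j, 0 ≤ p j)
    (hpsupp : ∀ j, j ∉ Jstar A C ν μ → p j = 0)
    (hform : ∀ i, n i = (ν i / μ i) * ((∑ j, p j * A j i) / κ i) ^ (1 / α))
    (hcs : ∀ j ∈ Jstar A C ν μ, p j * ((∑ i, A j i * n i / μ i) - w j) = 0)
    (hfeas : ∀ j ∈ Jstar A C ν μ, w j ≤ ∑ i, A j i * n i / μ i) :
    n ∈ WFeasible A C ν μ w ∧
      ∀ m ∈ WFeasible A C ν μ w, Ffun α κ ν μ n ≤ Ffun α κ ν μ m := by
  have hA0 : ∀ j i, 0 ≤ A j i := by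
    intro j i; rcases hA01 j i with h | h <;> rw [h] <;> norm_num
  set σ : Fin I → ℝ := fun i => ∑ j, p j * A j i with hσdef
  have hσ0 : ∀ i, 0 ≤ σ i := fun i =>
    Finset.sum_nonneg fun j _ => mul_nonneg (hp0 j) (hA0 j i)
  have hn0 : ∀ i, 0 ≤ n i := by
    intro i
    rw [hform i]
    exact mul_nonneg (div_nonneg (hν i).le (hμ i).le)
      (Real.rpow_nonneg (div_nonneg (hσ0 i) (hκ i).le) _)
  have hg : ∀ i, κ i * μ i ^ (α - 1) * (n i / ν i) ^ α = σ i / μ i := by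
    intro i
    have hs0 : 0 ≤ σ i / κ i := div_nonneg (hσ0 i) (hκ i).le
    have hx : n i / ν i = (σ i / κ i) ^ (1 / α) / μ i := by
      have h := hform i
      rw [show (∑ j, p j * A j i) = σ i from rfl] at h
      rw [h]
      field_simp [(hν i).ne', (hμ i).ne']
    rw [hx, Real.div_rpow (Real.rpow_nonneg hs0 _) (hμ i).le, ← Real.rpow_mul hs0,
      one_div_mul_cancel hα.ne', Real.rpow_one, Real.rpow_sub (hμ i), Real.rpow_one]
    have hμα : (0 : ℝ) < μ i ^ α := Real.rpow_pos_of_pos (hμ i) α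
    field_simp [(hκ i).ne', hμα.ne', (hμ i).ne']
  refine ⟨⟨hn0, hfeas⟩, ?_⟩
  rintro m ⟨hm0, hmfeas⟩
  have key : ∀ i, (σ i / μ i) * (m i - n i) ≤
      (ν i * κ i * μ i ^ (α - 1) / (α + 1)) *
        ((m i / ν i) ^ (α + 1) - (n i / ν i) ^ (α + 1)) := by
    intro i
    have h := gradA hα (div_nonneg (hn0 i) (hν i).le) (div_nonneg (hm0 i) (hν i).le)
    have h2 : (α + 1) * (n i / ν i) ^ α * (m i / ν i - n i / ν i) ≤
        (m i / ν i) ^ (α + 1) - (n i / ν i) ^ (α + 1) := by linarith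
    have hμ1 : (0 : ℝ) < μ i ^ (α - 1) := Real.rpow_pos_of_pos (hμ i) _
    have hc : 0 ≤ ν i * κ i * μ i ^ (α - 1) / (α + 1) :=
      le_of_lt (div_pos (mul_pos (mul_pos (hν i) (hκ i)) hμ1) (by linarith))
    calc σ i / μ i * (m i - n i)
        = (ν i * κ i * μ i ^ (α - 1) / (α + 1)) *
            ((α + 1) * (n i / ν i) ^ α * (m i / ν i - n i / ν i)) := by
          rw [← hg i]
          field_simp [(hν i).ne', (hμ i).ne']
      _ ≤ _ := mul_le_mul_of_nonneg_left h2 hc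
  have hsum1 : ∑ i, (σ i / μ i) * (m i - n i) ≤ Ffun α κ ν μ m - Ffun α κ ν μ n := by
    have h := Finset.sum_le_sum fun i (_ : i ∈ Finset.univ) => key i
    have heq : ∑ i, (ν i * κ i * μ i ^ (α - 1) / (α + 1)) *
        ((m i / ν i) ^ (α + 1) - (n i / ν i) ^ (α + 1))
        = Ffun α κ ν μ m - Ffun α κ ν μ n := by
      unfold Ffun
      rw [← mul_sub, ← Finset.sum_sub_distrib, Finset.mul_sum]
      refine Finset.sum_congr rfl fun i _ => ?_
      ring
    rw [heq] at h
    exact h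
  have hsum2 : 0 ≤ ∑ i, (σ i / μ i) * (m i - n i) := by
    have hswap : ∑ i, (σ i / μ i) * (m i - n i)
        = ∑ j, p j * ((∑ i, A j i * m i / μ i) - (∑ i, A j i * n i / μ i)) := by
      calc ∑ i, (σ i / μ i) * (m i - n i)
          = ∑ i, ∑ j, p j * (A j i * m i / μ i - A j i * n i / μ i) := by
            refine Finset.sum_congr rfl fun i _ => ?_
            rw [hσdef]
            rw [Finset.sum_div, Finset.sum_mul]
            refine Finset.sum_congr rfl fun j _ => ?_
            field_simp
        _ = ∑ j, ∑ i, p j * (A j i * m i / μ i - A j i * n i / μ i) := Finset.sum_comm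
        _ = ∑ j, p j * ((∑ i, A j i * m i / μ i) - (∑ i, A j i * n i / μ i)) := by
            refine Finset.sum_congr rfl fun j _ => ?_
            rw [← Finset.mul_sum, Finset.sum_sub_distrib]
    rw [hswap]
    refine Finset.sum_nonneg fun j _ => ?_
    rcases eq_or_lt_of_le (hp0 j) with h0 | hpj
    · rw [← h0, zero_mul]
    · have hjJ : j ∈ Jstar A C ν μ := by
        by_contra hj
        exact absurd (hpsupp j hj) hpj.ne'
      have hWn : (∑ i, A j i * n i / μ i) = w j := by
        have := hcs j hjJ
        rcases mul_eq_zero.1 this with h | h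
        · exact absurd h hpj.ne'
        · linarith [sub_eq_zero.1 h]
      have := hmfeas j hjJ
      have : 0 ≤ (∑ i, A j i * m i / μ i) - (∑ i, A j i * n i / μ i) := by
        rw [hWn]; linarith
      exact mul_nonneg hpj.le this
  linarith [hsum1, hsum2]
/-- Strict convexity: the minimizer is unique. -/
lemma min_unique {I J : ℕ} (A : Fin J → Fin I → ℝ) (C : Fin J → ℝ) {α : ℝ} (hα : 0 < α)
    (κ : Fin I → ℝ) (hκ : ∀ i, 0 < κ i) (ν μ : Fin I → ℝ) (hν : ∀ i, 0 < ν i)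
    (hμ : ∀ i, 0 < μ i) (w : Fin J → ℝ) (n n' : Fin I → ℝ)
    (hn : n ∈ WFeasible A C ν μ w) (hn' : n' ∈ WFeasible A C ν μ w)
    (hmin : ∀ m ∈ WFeasible A C ν μ w, Ffun α κ ν μ n ≤ Ffun α κ ν μ m)
    (hmin' : ∀ m ∈ WFeasible A C ν μ w, Ffun α κ ν μ n' ≤ Ffun α κ ν μ m) : n = n' := by
  by_contra hne
  obtain ⟨i0, hi0⟩ : ∃ i, n i ≠ n' i := Function.ne_iff.1 hne
  set mid : Fin I → ℝ := fun i => (n i + n' i) / 2 with hmid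
  have hmidW : mid ∈ WFeasible A C ν μ w := by
    constructor
    · intro i
      have := hn.1 i; have := hn'.1 i
      simp only [hmid]
      linarith
    · intro j hj
      have h1 := hn.2 j hj
      have h2 := hn'.2 j hj
      have heq : ∑ i, A j i * mid i / μ i
          = ((∑ i, A j i * n i / μ i) + (∑ i, A j i * n' i / μ i)) / 2 := by
        rw [← Finset.sum_add_distrib, Finset.sum_div]
        refine Finset.sum_congr rfl fun i _ => ?_
        simp only [hmid]
        ring
      rw [heq]
      linarith
  have hFeq : Ffun α κ ν μ n = Ffun α κ ν μ n' :=
    le_antisymm (hmin n' hn') (hmin' n hn)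
  have hβ : (1 : ℝ) < α + 1 := by linarith
  have hsc := strictConvexOn_rpow hβ
  have hterm : ∀ i, ν i * κ i * μ i ^ (α - 1) * (mid i / ν i) ^ (α + 1) ≤
      (ν i * κ i * μ i ^ (α - 1) * (n i / ν i) ^ (α + 1)
        + ν i * κ i * μ i ^ (α - 1) * (n' i / ν i) ^ (α + 1)) / 2 := by
    intro i
    have hx : n i / ν i ∈ Ici (0 : ℝ) := div_nonneg (hn.1 i) (hν i).le
    have hy : n' i / ν i ∈ Ici (0 : ℝ) := div_nonneg (hn'.1 i) (hν i).le
    have h := hsc.convexOn.2 hx hy (by norm_num : (0:ℝ) ≤ 1/2) (by norm_num : (0:ℝ) ≤ 1/2)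
      (by norm_num)
    have hmm : (1/2 : ℝ) • (n i / ν i) + (1/2 : ℝ) • (n' i / ν i) = mid i / ν i := by
      simp only [smul_eq_mul, hmid]
      ring
    rw [hmm] at h
    have hco : (0 : ℝ) < ν i * κ i * μ i ^ (α - 1) :=
      mul_pos (mul_pos (hν i) (hκ i)) (Real.rpow_pos_of_pos (hμ i) _)
    have := mul_le_mul_of_nonneg_left h hco.le
    calc ν i * κ i * μ i ^ (α - 1) * (mid i / ν i) ^ (α + 1)
        ≤ ν i * κ i * μ i ^ (α - 1) *
            ((1/2 : ℝ) * (n i / ν i) ^ (α + 1) + (1/2 : ℝ) * (n' i / ν i) ^ (α + 1)) := by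
          simpa [smul_eq_mul] using this
      _ = _ := by ring
  have hstrict : ν i0 * κ i0 * μ i0 ^ (α - 1) * (mid i0 / ν i0) ^ (α + 1) <
      (ν i0 * κ i0 * μ i0 ^ (α - 1) * (n i0 / ν i0) ^ (α + 1)
        + ν i0 * κ i0 * μ i0 ^ (α - 1) * (n' i0 / ν i0) ^ (α + 1)) / 2 := by
    have hx : n i0 / ν i0 ∈ Ici (0 : ℝ) := div_nonneg (hn.1 i0) (hν i0).le
    have hy : n' i0 / ν i0 ∈ Ici (0 : ℝ) := div_nonneg (hn'.1 i0) (hν i0).le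
    have hxy : n i0 / ν i0 ≠ n' i0 / ν i0 := by
      intro h
      exact hi0 (by
        field_simp [(hν i0).ne'] at h
        exact h)
    have h := hsc.2 hx hy hxy (by norm_num : (0:ℝ) < 1/2) (by norm_num : (0:ℝ) < 1/2)
      (by norm_num)
    have hmm : (1/2 : ℝ) • (n i0 / ν i0) + (1/2 : ℝ) • (n' i0 / ν i0) = mid i0 / ν i0 := by
      simp only [smul_eq_mul, hmid]
      ring
    rw [hmm] at h
    have hco : (0 : ℝ) < ν i0 * κ i0 * μ i0 ^ (α - 1) :=
      mul_pos (mul_pos (hν i0) (hκ i0)) (Real.rpow_pos_of_pos (hμ i0) _)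
    have := mul_lt_mul_of_pos_left h hco
    calc ν i0 * κ i0 * μ i0 ^ (α - 1) * (mid i0 / ν i0) ^ (α + 1)
        < ν i0 * κ i0 * μ i0 ^ (α - 1) *
            ((1/2 : ℝ) * (n i0 / ν i0) ^ (α + 1) + (1/2 : ℝ) * (n' i0 / ν i0) ^ (α + 1)) := by
          simpa [smul_eq_mul] using this
      _ = _ := by ring
  have hsum : ∑ i, ν i * κ i * μ i ^ (α - 1) * (mid i / ν i) ^ (α + 1) <
      ∑ i, (ν i * κ i * μ i ^ (α - 1) * (n i / ν i) ^ (α + 1)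
        + ν i * κ i * μ i ^ (α - 1) * (n' i / ν i) ^ (α + 1)) / 2 :=
    Finset.sum_lt_sum (fun i _ => hterm i) ⟨i0, Finset.mem_univ i0, hstrict⟩
  have hFmid : Ffun α κ ν μ mid < Ffun α κ ν μ n := by
    unfold Ffun
    have h1 : (0 : ℝ) < 1 / (α + 1) := by positivity
    have h2 := mul_lt_mul_of_pos_left hsum h1
    have h3 : (1 / (α + 1)) * ∑ i, (ν i * κ i * μ i ^ (α - 1) * (n i / ν i) ^ (α + 1)
        + ν i * κ i * μ i ^ (α - 1) * (n' i / ν i) ^ (α + 1)) / 2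
        = ((1 / (α + 1)) * ∑ i, ν i * κ i * μ i ^ (α - 1) * (n i / ν i) ^ (α + 1)
          + (1 / (α + 1)) * ∑ i, ν i * κ i * μ i ^ (α - 1) * (n' i / ν i) ^ (α + 1)) / 2 := by
      simp only [Finset.mul_sum]
      rw [← Finset.sum_add_distrib, Finset.sum_div]
      exact Finset.sum_congr rfl fun i _ => by ring
    rw [h3] at h2
    have hFn' : (1 / (α + 1)) * ∑ i, ν i * κ i * μ i ^ (α - 1) * (n' i / ν i) ^ (α + 1)
        = (1 / (α + 1)) * ∑ i, ν i * κ i * μ i ^ (α - 1) * (n i / ν i) ^ (α + 1) := by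
      have := hFeq
      unfold Ffun at this
      linarith
    rw [hFn'] at h2
    linarith
  exact absurd (hmin mid hmidW) (not_le.2 hFmid)
set_option maxHeartbeats 2000000 in
/-- Existence of the dual (Lagrange multiplier) vector. -/
lemma dual_exists {I J : ℕ} (hI : 0 < I) (hJ : 0 < J) (A : Fin J → Fin I → ℝ)
    (hA01 : ∀ j i, A j i = 0 ∨ A j i = 1) (hArank : LinearIndependent ℝ A)
    (C : Fin J → ℝ) {α : ℝ} (hα : 0 < α) (κ : Fin I → ℝ) (hκ : ∀ i, 0 < κ i)
    (ν μ : Fin I → ℝ) (hν : ∀ i, 0 < ν i) (hμ : ∀ i, 0 < μ i)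
    (w : Fin J → ℝ) (hw : ∀ j, 0 ≤ w j) :
    ∃ p : Fin J → ℝ, (∀ j, 0 ≤ p j) ∧ (∀ j, j ∉ Jstar A C ν μ → p j = 0) ∧
      (∀ j ∈ Jstar A C ν μ,
        p j * ((∑ i, A j i * ((ν i / μ i) * ((∑ j', p j' * A j' i) / κ i) ^ (1 / α)) / μ i)
          - w j) = 0) ∧
      ∀ j ∈ Jstar A C ν μ,
        w j ≤ ∑ i, A j i * ((ν i / μ i) * ((∑ j', p j' * A j' i) / κ i) ^ (1 / α)) / μ i := by
  classical
  haveI : Nonempty (Fin I) := ⟨⟨0, hI⟩⟩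
  haveI : Nonempty (Fin J) := ⟨⟨0, hJ⟩⟩
  have hA0 : ∀ j i, 0 ≤ A j i := by
    intro j i; rcases hA01 j i with h | h <;> rw [h] <;> norm_num
  have hrow : ∀ j, ∃ i, A j i = 1 := by
    intro j
    have hne : A j ≠ 0 := hArank.ne_zero j
    obtain ⟨i, hi⟩ := Function.ne_iff.1 hne
    rcases hA01 j i with h | h
    · exact absurd h hi
    · exact ⟨i, h⟩
  set β : ℝ := 1 + 1 / α with hβdef
  have hβ1 : (1 : ℝ) < β := by
    have : 0 < 1 / α := by positivity
    simp only [hβdef]; linarith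
  have hβ0 : (0 : ℝ) < β := by linarith
  set c : Fin I → ℝ := fun i => (α / (α + 1)) * (ν i / (μ i * μ i * κ i ^ (1 / α))) with hcdef
  have hc : ∀ i, 0 < c i := by
    intro i
    have h1 : (0 : ℝ) < κ i ^ (1 / α) := Real.rpow_pos_of_pos (hκ i) _
    have h2 := hν i; have h3 := hμ i
    simp only [hcdef]
    positivity
  set Φ : (Fin J → ℝ) → ℝ :=
    fun p => (∑ j, p j * w j) - ∑ i, c i * (∑ j, p j * A j i) ^ β with hΦdef
  set K : Set (Fin J → ℝ) :=
    {p | (∀ j, 0 ≤ p j) ∧ ∀ j, j ∉ Jstar A C ν μ → p j = 0} with hKdef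
  have hΦ0 : Φ 0 = 0 := by
    simp [hΦdef, Real.zero_rpow hβ0.ne']
  -- bounds
  set B : ℝ := 1 + ∑ j, w j with hBdef
  have hB0 : 0 < B := by
    have : 0 ≤ ∑ j, w j := Finset.sum_nonneg fun j _ => hw j
    simp only [hBdef]; linarith
  have hwB : ∀ j, w j ≤ B := by
    intro j
    have := Finset.single_le_sum (fun j (_ : j ∈ Finset.univ) => hw j) (Finset.mem_univ j)
    simp only [hBdef]; linarith
  set cm : ℝ := Finset.univ.inf' Finset.univ_nonempty c with hcmdef
  have hcm0 : 0 < cm := by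
    rw [hcmdef, Finset.lt_inf'_iff]
    exact fun i _ => hc i
  have hcmle : ∀ i, cm ≤ c i := fun i => Finset.inf'_le c (Finset.mem_univ i)
  -- coercivity bound
  have hkey : ∀ p ∈ K, ∀ M : ℝ, 0 ≤ M → (∀ j, p j ≤ M) → (∃ j0, M = p j0) →
      Φ p ≤ (J : ℝ) * B * M - cm * M ^ β := by
    rintro p hp M hM0 hMub ⟨j0, hj0⟩
    have h1 : ∑ j, p j * w j ≤ (J : ℝ) * B * M := by
      calc ∑ j, p j * w j ≤ ∑ _j : Fin J, M * B :=
            Finset.sum_le_sum fun j _ =>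
              mul_le_mul (hMub j) (hwB j) (hw j) hM0
        _ = (J : ℝ) * B * M := by
            simp [Finset.sum_const, Finset.card_univ]
            ring
    have h2 : cm * M ^ β ≤ ∑ i, c i * (∑ j, p j * A j i) ^ β := by
      obtain ⟨i0, hi0⟩ := hrow j0
      have hσ0 : ∀ i, 0 ≤ ∑ j, p j * A j i := fun i =>
        Finset.sum_nonneg fun j _ => mul_nonneg (hp.1 j) (hA0 j i)
      have hσM : M ≤ ∑ j, p j * A j i0 := by
        calc M = p j0 * A j0 i0 := by rw [hj0, hi0, mul_one]
          _ ≤ ∑ j, p j * A j i0 :=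
            Finset.single_le_sum (fun j _ => mul_nonneg (hp.1 j) (hA0 j i0))
              (Finset.mem_univ j0)
      calc cm * M ^ β ≤ c i0 * (∑ j, p j * A j i0) ^ β :=
            mul_le_mul (hcmle i0) (Real.rpow_le_rpow hM0 hσM hβ0.le)
              (Real.rpow_nonneg hM0 β) (hc i0).le
        _ ≤ ∑ i, c i * (∑ j, p j * A j i) ^ β :=
            Finset.single_le_sum
              (fun i _ => mul_nonneg (hc i).le (Real.rpow_nonneg (hσ0 i) β))
              (Finset.mem_univ i0)
    simp only [hΦdef]
    linarith
  -- the threshold R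
  set R : ℝ := max 1 (((J : ℝ) * B / cm + 1) ^ α) with hRdef
  have hR1 : (1 : ℝ) ≤ R := le_max_left _ _
  have hbig : ∀ M : ℝ, R < M → (J : ℝ) * B * M - cm * M ^ β < 0 := by
    intro M hM
    have hM1 : (1 : ℝ) < M := lt_of_le_of_lt hR1 hM
    have hM0 : (0 : ℝ) < M := by linarith
    have hX : (0 : ℝ) < (J : ℝ) * B / cm + 1 := by
      have : (0 : ℝ) ≤ (J : ℝ) * B / cm := by positivity
      linarith
    have hstep : ((J : ℝ) * B / cm + 1) < M ^ (1 / α) := by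
      have hXR : ((J : ℝ) * B / cm + 1) ^ α ≤ R := by
        rw [hRdef]; exact le_max_right _ _
      have h1 : ((J : ℝ) * B / cm + 1) ^ α < M := lt_of_le_of_lt hXR hM
      have h2 := Real.rpow_lt_rpow (Real.rpow_nonneg hX.le α) h1
        (by positivity : (0:ℝ) < 1/α)
      rwa [← Real.rpow_mul hX.le, mul_one_div, div_self hα.ne', Real.rpow_one] at h2
    have hMβ : M ^ β = M ^ (1 / α) * M := by
      rw [hβdef, add_comm, Real.rpow_add hM0, Real.rpow_one]
    have h3 : (J : ℝ) * B < cm * M ^ (1 / α) := by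
      have := mul_lt_mul_of_pos_left hstep hcm0
      have hcmJB : cm * ((J : ℝ) * B / cm + 1) = (J : ℝ) * B + cm := by
        field_simp
      rw [hcmJB] at this
      linarith
    have h4 : (J : ℝ) * B * M < cm * M ^ (1 / α) * M :=
      mul_lt_mul_of_pos_right h3 hM0
    rw [hMβ]
    linarith
  -- compact truncation
  have hScomp : IsCompact (Set.pi Set.univ
      (fun j => if j ∈ Jstar A C ν μ then Icc (0 : ℝ) (R + 1) else ({0} : Set ℝ))) := by
    apply isCompact_univ_pi
    intro j
    by_cases hj : j ∈ Jstar A C ν μ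
    · rw [if_pos hj]; exact isCompact_Icc
    · rw [if_neg hj]; exact isCompact_singleton
  have h0S : (0 : Fin J → ℝ) ∈ Set.pi Set.univ
      (fun j => if j ∈ Jstar A C ν μ then Icc (0 : ℝ) (R + 1) else ({0} : Set ℝ)) := by
    refine Set.mem_univ_pi.2 fun j => ?_
    by_cases hj : j ∈ Jstar A C ν μ
    · rw [if_pos hj]
      simp only [Pi.zero_apply, Set.mem_Icc]
      exact ⟨le_refl _, by linarith⟩
    · rw [if_neg hj]
      simp
  have hΦc : Continuous Φ := by
    apply Continuous.sub
    · exact continuous_finset_sum _ fun j _ => (continuous_apply j).mul continuous_const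
    · refine continuous_finset_sum _ fun i _ => continuous_const.mul ?_
      exact Continuous.rpow_const
        (continuous_finset_sum _ fun j _ => (continuous_apply j).mul continuous_const)
        (fun x => Or.inr hβ0.le)
  obtain ⟨q, hqS, hqmax⟩ := hScomp.exists_isMaxOn ⟨0, h0S⟩ hΦc.continuousOn
  have hqS' : ∀ j, q j ∈ (if j ∈ Jstar A C ν μ then Icc (0 : ℝ) (R + 1) else ({0} : Set ℝ)) :=
    Set.mem_univ_pi.1 hqS
  have hqK : q ∈ K := by
    constructor
    · intro j
      have h := hqS' j
      by_cases hj : j ∈ Jstar A C ν μ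
      · rw [if_pos hj] at h; exact h.1
      · rw [if_neg hj] at h
        simp only [Set.mem_singleton_iff] at h
        rw [h]
    · intro j hj
      have h := hqS' j
      rw [if_neg hj] at h
      simpa using h
  have hq0 : Φ 0 ≤ Φ q := hqmax h0S
  -- q is a global maximum over K
  have hqglob : ∀ p ∈ K, Φ p ≤ Φ q := by
    intro p hp
    by_cases hpS : p ∈ Set.pi Set.univ
        (fun j => if j ∈ Jstar A C ν μ then Icc (0 : ℝ) (R + 1) else ({0} : Set ℝ))
    · exact hqmax hpS
    · obtain ⟨j0, hj0⟩ := Finset.exists_max_image Finset.univ p Finset.univ_nonempty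
      set M := p j0 with hMdef
      have hM0 : 0 ≤ M := hp.1 j0
      have hMub : ∀ j, p j ≤ M := fun j => hj0.2 j (Finset.mem_univ j)
      have hMR : R < M := by
        by_contra hMR
        push_neg at hMR
        apply hpS
        refine Set.mem_univ_pi.2 fun j => ?_
        by_cases hj : j ∈ Jstar A C ν μ
        · rw [if_pos hj]
          exact ⟨hp.1 j, le_trans (hMub j) (by linarith)⟩
        · rw [if_neg hj]
          simp [hp.2 j hj]
      have h1 := hkey p hp M hM0 hMub ⟨j0, rfl⟩
      have h2 := hbig M hMR
      have h0q : (0 : ℝ) ≤ Φ q := by rw [← hΦ0]; exact hq0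
      linarith
  -- first-order conditions at q
  have hσq0 : ∀ i, 0 ≤ ∑ j', q j' * A j' i := fun i =>
    Finset.sum_nonneg fun j _ => mul_nonneg (hqK.1 j) (hA0 j i)
  have hfoc : ∀ j ∈ Jstar A C ν μ,
      (w j - ∑ i, c i * (A j i * β * (∑ j', q j' * A j' i) ^ (β - 1)) ≤ 0) ∧
      q j * (w j - ∑ i, c i * (A j i * β * (∑ j', q j' * A j' i) ^ (β - 1))) = 0 := by
    intro j hj
    set b : Fin I → ℝ := fun i => ∑ j' ∈ Finset.univ.erase j, q j' * A j' i with hbdef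
    set φ : ℝ → ℝ := fun t => Φ (Function.update q j t) with hφdef
    set D : ℝ := w j - ∑ i, c i * (A j i * β * (∑ j', q j' * A j' i) ^ (β - 1)) with hDdef
    have hσb : ∀ i, q j * A j i + b i = ∑ j', q j' * A j' i := by
      intro i
      simp only [hbdef]
      exact Finset.add_sum_erase Finset.univ (fun j' => q j' * A j' i) (Finset.mem_univ j)
    have hφeq : φ = fun t => (t * w j + ∑ j' ∈ Finset.univ.erase j, q j' * w j')
        - ∑ i, c i * ((t * A j i + b i) ^ β) := by
      funext t
      simp only [hφdef, hΦdef]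
      congr 1
      · rw [← Finset.add_sum_erase _ (fun j' => Function.update q j t j' * w j')
          (Finset.mem_univ j)]
        congr 1
        · rw [Function.update_self]
        · exact Finset.sum_congr rfl fun j' hj' =>
            by rw [Function.update_of_ne (Finset.ne_of_mem_erase hj')]
      · refine Finset.sum_congr rfl fun i _ => ?_
        congr 2
        rw [← Finset.add_sum_erase _ (fun j' => Function.update q j t j' * A j' i)
          (Finset.mem_univ j), Function.update_self]
        congr 1
        exact Finset.sum_congr rfl fun j' hj' =>
          by rw [Function.update_of_ne (Finset.ne_of_mem_erase hj')]
    have hφd : HasDerivAt φ D (q j) := by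
      rw [hφeq]
      have hd1 : HasDerivAt (fun t : ℝ => t * w j + ∑ j' ∈ Finset.univ.erase j, q j' * w j')
          (w j) (q j) := by
        simpa using ((hasDerivAt_id (q j)).mul_const (w j)).add_const
          (∑ j' ∈ Finset.univ.erase j, q j' * w j')
      have hd2 : HasDerivAt (fun t : ℝ => ∑ i, c i * ((t * A j i + b i) ^ β))
          (∑ i, c i * (A j i * β * (∑ j', q j' * A j' i) ^ (β - 1))) (q j) := by
        refine HasDerivAt.fun_sum fun i _ => ?_
        have hinner : HasDerivAt (fun t : ℝ => t * A j i + b i) (A j i) (q j) := by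
          simpa using ((hasDerivAt_id (q j)).mul_const (A j i)).add_const (b i)
        have hpow := hinner.rpow_const (Or.inr hβ1.le)
        have : (fun t : ℝ => (t * A j i + b i) ^ β) = fun t => (t * A j i + b i) ^ β := rfl
        have h2 := hpow.const_mul (c i)
        rw [hσb i] at h2
        exact h2
      have := hd1.sub hd2
      convert this using 1 <;> rfl
    have hmaxon : IsMaxOn φ (Ici 0) (q j) := by
      intro t ht
      have hup : Function.update q j t ∈ K := by
        constructor
        · intro j'
          rcases eq_or_ne j' j with rfl | hne
          · rw [Function.update_self]; exact ht
          · rw [Function.update_of_ne hne]; exact hqK.1 j'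
        · intro j' hj'
          have hne : j' ≠ j := fun h => hj' (h ▸ hj)
          rw [Function.update_of_ne hne]; exact hqK.2 j' hj'
      have h1 : φ t ≤ Φ q := hqglob _ hup
      have h2 : φ (q j) = Φ q := by
        simp only [hφdef, Function.update_eq_self]
      simp only [Set.mem_setOf_eq]
      rw [h2]
      exact h1
    have hqj0 : 0 ≤ q j := hqK.1 j
    have hone : (1 : ℝ) ∈ posTangentConeAt (Ici (0:ℝ)) (q j) := by
      apply mem_posTangentConeAt_of_segment_subset
      apply (convex_Ici (0:ℝ)).segment_subset
      · exact Set.mem_Ici.2 hqj0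
      · exact Set.mem_Ici.2 (by linarith)
    have hDle : D ≤ 0 := by
      have h := hmaxon.localize.hasFDerivWithinAt_nonpos
        (hφd.hasDerivWithinAt (s := Ici (0:ℝ))) hone
      simpa using h
    have hqD : 0 ≤ q j * D := by
      rcases eq_or_lt_of_le hqj0 with h0 | hpos
      · rw [← h0, zero_mul]
      · have hneg : -(q j) ∈ posTangentConeAt (Ici (0:ℝ)) (q j) := by
          apply mem_posTangentConeAt_of_segment_subset
          have : q j + -(q j) = 0 := by ring
          rw [this]
          apply (convex_Ici (0:ℝ)).segment_subset
          · exact Set.mem_Ici.2 hqj0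
          · exact Set.self_mem_Ici
        have h := hmaxon.localize.hasFDerivWithinAt_nonpos
          (hφd.hasDerivWithinAt (s := Ici (0:ℝ))) hneg
        simp at h
        nlinarith
    constructor
    · exact hDle
    · have hle : q j * D ≤ 0 := mul_nonpos_of_nonneg_of_nonpos hqj0 hDle
      linarith
  -- convert the sum into the required form
  have hconv : ∀ j, ∑ i, c i * (A j i * β * (∑ j', q j' * A j' i) ^ (β - 1))
      = ∑ i, A j i * ((ν i / μ i) * ((∑ j', q j' * A j' i) / κ i) ^ (1 / α)) / μ i := by
    intro j
    refine Finset.sum_congr rfl fun i _ => ?_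
    have hβm1 : β - 1 = 1 / α := by simp only [hβdef]; ring
    have hκα : (0 : ℝ) < κ i ^ (1 / α) := Real.rpow_pos_of_pos (hκ i) _
    have hfac : α / (α + 1) * (1 + 1 / α) = 1 := by
      have h1 : α + 1 ≠ 0 := by positivity
      field_simp
    have hcβ : c i * β = ν i / (μ i * μ i * κ i ^ (1 / α)) := by
      calc c i * β
          = (ν i / (μ i * μ i * κ i ^ (1 / α))) * (α / (α + 1) * (1 + 1 / α)) := by
            simp only [hcdef, hβdef]; ring
        _ = ν i / (μ i * μ i * κ i ^ (1 / α)) := by rw [hfac, mul_one]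
    rw [hβm1, Real.div_rpow (hσq0 i) (hκ i).le]
    have : c i * (A j i * β * (∑ j', q j' * A j' i) ^ (1 / α))
        = A j i * ((c i * β) * (∑ j', q j' * A j' i) ^ (1 / α)) := by ring
    rw [this, hcβ]
    field_simp [(hμ i).ne', hκα.ne']
  refine ⟨q, hqK.1, hqK.2, ?_, ?_⟩
  · intro j hj
    have h := (hfoc j hj).2
    rw [hconv j] at h
    have : q j * (w j - (∑ i, A j i * ((ν i / μ i) * ((∑ j', q j' * A j' i) / κ i) ^ (1 / α)) / μ i)) = 0 := h
    nlinarith [this]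
  · intro j hj
    have h := (hfoc j hj).1
    rw [hconv j] at h
    linarith
theorem stmt14 {I J : ℕ} (hI : 0 < I) (hJ : 0 < J)
    (A : Fin J → Fin I → ℝ) (hA01 : ∀ j i, A j i = 0 ∨ A j i = 1)
    (hAcol : ∀ i, ∃ j, A j i = 1) (hArank : LinearIndependent ℝ A)
    (C : Fin J → ℝ) (hC : ∀ j, 0 < C j)
    (α : ℝ) (hα : 0 < α) (κ : Fin I → ℝ) (hκ : ∀ i, 0 < κ i)
    (ν μ : Fin I → ℝ) (hν : ∀ i, 0 < ν i) (hμ : ∀ i, 0 < μ i)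
    (hload : ∀ j, (∑ i, A j i * (ν i / μ i)) ≤ C j)
    (hJs : (Jstar A C ν μ).Nonempty)
    (w : Fin J → ℝ) (hw : ∀ j, 0 ≤ w j) (n : Fin I → ℝ) :
    (n ∈ WFeasible A C ν μ w ∧
        ∀ m ∈ WFeasible A C ν μ w, Ffun α κ ν μ n ≤ Ffun α κ ν μ m) ↔
      ∃ p : Fin J → ℝ, (∀ j, 0 ≤ p j) ∧ (∀ j, j ∉ Jstar A C ν μ → p j = 0) ∧
        (∀ i, n i = (ν i / μ i) * ((∑ j, p j * A j i) / κ i) ^ (1 / α)) ∧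
        (∀ j ∈ Jstar A C ν μ, p j * ((∑ i, A j i * n i / μ i) - w j) = 0) ∧
        ∀ j ∈ Jstar A C ν μ, w j ≤ ∑ i, A j i * n i / μ i := by
  constructor
  · rintro ⟨hnW, hnmin⟩
    obtain ⟨p, hp0, hpsupp, hcs, hfeas⟩ :=
      dual_exists hI hJ A hA01 hArank C hα κ hκ ν μ hν hμ w hw
    have hmin' := kkt_to_min A hA01 C hα κ hκ ν μ hν hμ w
      (fun i => (ν i / μ i) * ((∑ j, p j * A j i) / κ i) ^ (1 / α)) p hp0 hpsupp
      (fun i => rfl) hcs hfeas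
    have heq : n = fun i => (ν i / μ i) * ((∑ j, p j * A j i) / κ i) ^ (1 / α) :=
      min_unique A C hα κ hκ ν μ hν hμ w n _ hnW hmin'.1 hnmin hmin'.2
    refine ⟨p, hp0, hpsupp, fun i => by rw [heq], ?_, ?_⟩
    · intro j hj
      rw [heq]
      exact hcs j hj
    · intro j hj
      rw [heq]
      exact hfeas j hj
  · rintro ⟨p, hp0, hpsupp, hform, hcs, hfeas⟩
    exact kkt_to_min A hA01 C hα κ hκ ν μ hν hμ w n p hp0 hpsupp hform hcs hfeas
end
end
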